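/- arXiv:1511.07020 — 4 statements merged into one kernel-verified Lean document; each statement's English description precedes it below -/
import Mathlib

section
/- Let w ∈ ℝⁿ with w > 0 componentwise, let W = diag(w₁,…,wₙ), and let L = A W Aᵀ (which is invertible since A has full row rank). Then for every index i ∈ {1,…,n}, the vector p solving L p = aᵢ (where aᵢ is the i-th column of A) satisfies ‖Aᵀ p‖_∞ ≤ 𝒟 / wᵢ, where 𝒟 = max{|det A'| : A' is a square submatrix of A}. -/
open Matrix Filter Set Topology

/-- The real matrix obtained from an integer matrix by coercion of entries. -/
noncomputable def rmat {m n : ℕ} (A : Matrix (Fin m) (Fin n) ℤ) :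
    Matrix (Fin m) (Fin n) ℝ :=
  A.map (Int.cast : ℤ → ℝ)

/-- The diagonal matrix `W = diag (x i / c i)`. -/
noncomputable def physW {n : ℕ} (c x : Fin n → ℝ) : Matrix (Fin n) (Fin n) ℝ :=
  Matrix.diagonal (fun i => x i / c i)

/-- The Physarum vector `q = W Aᵀ L⁻¹ b` where `L = A W Aᵀ`. -/
noncomputable def physQ {m n : ℕ} (B : Matrix (Fin m) (Fin n) ℝ) (b : Fin m → ℝ)
    (c x : Fin n → ℝ) : Fin n → ℝ :=
  physW c x *ᵥ (Bᵀ *ᵥ ((B * physW c x * Bᵀ)⁻¹ *ᵥ b))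

/-- The set of absolute values of determinants of square submatrices of `A` (as reals). -/
def subdets {m n : ℕ} (A : Matrix (Fin m) (Fin n) ℤ) : Set ℝ :=
  {d | ∃ (k : ℕ) (f : Fin k → Fin m) (g : Fin k → Fin n),
    Function.Injective f ∧ Function.Injective g ∧
    d = |((A.submatrix f g).det : ℝ)|}

/-- `x` is a solution of the Physarum dynamics `ẋ = q - x` on the time set `s`,
staying in the positive orthant. -/
def IsPhysSolOn {m n : ℕ} (B : Matrix (Fin m) (Fin n) ℝ) (b : Fin m → ℝ)
    (c : Fin n → ℝ) (x : ℝ → Fin n → ℝ) (s : Set ℝ) : Prop :=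
  ∀ t ∈ s, (∀ i, 0 < x t i) ∧ HasDerivWithinAt x (physQ B b c (x t) - x t) s t

open Finset in
/-- Row-expansion of the determinant of a product of rectangular matrices. -/
lemma det_mul_expand {I K : Type*} [Fintype I] [DecidableEq I] [Fintype K]
    (P : Matrix I K ℝ) (Q : Matrix K I ℝ) :
    (P * Q).det = ∑ g : I → K, (∏ k, P k (g k)) * (Q.submatrix g id).det := by
  have h1 : (P * Q).det
      = (Matrix.detRowAlternating : (I → ℝ) [⋀^I]→ₗ[ℝ] ℝ) (fun i => ∑ l : K, P i l • Q l) := by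
    congr 1
    ext i j
    simp [Matrix.mul_apply]
  rw [h1]
  rw [← AlternatingMap.coe_multilinearMap]
  rw [(Matrix.detRowAlternating : (I → ℝ) [⋀^I]→ₗ[ℝ] ℝ).toMultilinearMap.map_sum
    (g := fun i l => P i l • Q l)]
  refine Finset.sum_congr rfl fun g _ => ?_
  have h2 := (Matrix.detRowAlternating : (I → ℝ) [⋀^I]→ₗ[ℝ] ℝ).toMultilinearMap.map_smul_univ
    (fun i => P i (g i)) (fun i => Q (g i))
  rw [h2, smul_eq_mul]
  rfl

open Finset in
/-- Grouping a sum against an alternating function over all column choices. -/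
lemma alt_sum_expand {I K : Type*} [Fintype I] [DecidableEq I] [Fintype K]
    (P : Matrix I K ℝ) (F : (I → K) → ℝ)
    (hF : ∀ (σ : Equiv.Perm I) (g : I → K), F (g ∘ σ) = ((Equiv.Perm.sign σ : ℤ) : ℝ) * F g) :
    ∑ g : I → K, (P.submatrix id g).det * F g
      = (Nat.factorial (Fintype.card I) : ℝ) * ∑ g : I → K, (∏ k, P k (g k)) * F g := by
  have hsq : ∀ σ : Equiv.Perm I,
      ((Equiv.Perm.sign σ : ℤ) : ℝ) * ((Equiv.Perm.sign σ : ℤ) : ℝ) = 1 := by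
    intro σ
    rcases Int.units_eq_one_or (Equiv.Perm.sign σ) with h | h <;> rw [h] <;> norm_num
  have hdet : ∀ g : I → K, (P.submatrix id g).det
      = ∑ σ : Equiv.Perm I, ((Equiv.Perm.sign σ : ℤ) : ℝ) * ∏ k, P (σ k) (g k) := by
    intro g
    rw [Matrix.det_apply]
    refine Finset.sum_congr rfl fun σ _ => ?_
    rw [Units.smul_def, zsmul_eq_mul]
    rfl
  calc ∑ g : I → K, (P.submatrix id g).det * F g
      = ∑ σ : Equiv.Perm I, ∑ g : I → K,
          ((Equiv.Perm.sign σ : ℤ) : ℝ) * (∏ k, P (σ k) (g k)) * F g := by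
        simp_rw [hdet, Finset.sum_mul]
        rw [Finset.sum_comm]
    _ = ∑ _σ : Equiv.Perm I, ∑ h : I → K, (∏ k, P k (h k)) * F h := by
        refine Finset.sum_congr rfl fun σ _ => ?_
        refine (Fintype.sum_equiv (Equiv.arrowCongr σ.symm (Equiv.refl K)) _ _ fun h => ?_).symm
        have he : (Equiv.arrowCongr σ.symm (Equiv.refl K)) h = h ∘ σ := by
          ext k; simp
        rw [he, hF σ h]
        have hprod : (∏ k, P (σ k) ((h ∘ σ) k)) = ∏ k, P k (h k) :=
          Equiv.prod_comp σ (fun k => P k (h k))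
        rw [hprod]
        ring_nf
        rw [show ((Equiv.Perm.sign σ : ℤ) : ℝ) ^ 2 = 1 by rw [sq]; exact hsq σ, mul_one]
    _ = (Nat.factorial (Fintype.card I) : ℝ) * ∑ g : I → K, (∏ k, P k (g k)) * F g := by
        rw [Finset.sum_const, Finset.card_univ, Fintype.card_perm, nsmul_eq_mul]

open Finset in
lemma detC_sub {m n : ℕ} (B : Matrix (Fin m) (Fin n) ℝ) (w : Fin n → ℝ)
    (g : Fin m → Fin n) :
    ((Matrix.diagonal w * Bᵀ).submatrix g id).det
      = (∏ k, w (g k)) * (B.submatrix id g).det := by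
  have h : (Matrix.diagonal w * Bᵀ).submatrix g id
      = Matrix.diagonal (fun k => w (g k)) * (B.submatrix id g)ᵀ := by
    ext k r
    simp [Matrix.mul_apply, Matrix.diagonal, Finset.sum_ite_eq, Matrix.submatrix]
  rw [h, Matrix.det_mul, Matrix.det_diagonal, Matrix.det_transpose]

open Finset in
lemma sub_permute {m n : ℕ} (B : Matrix (Fin m) (Fin n) ℝ) (w : Fin n → ℝ)
    (σ : Equiv.Perm (Fin m)) (g : Fin m → Fin n) :
    ((Matrix.diagonal w * Bᵀ).submatrix (g ∘ σ) id).det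
      = ((Equiv.Perm.sign σ : ℤ) : ℝ) * ((Matrix.diagonal w * Bᵀ).submatrix g id).det := by
  have h : (Matrix.diagonal w * Bᵀ).submatrix (g ∘ σ) id
      = ((Matrix.diagonal w * Bᵀ).submatrix g id).submatrix σ id := by
    ext k r; rfl
  rw [h, Matrix.det_permute]

open Finset in
lemma detL_formula {m n : ℕ} (B : Matrix (Fin m) (Fin n) ℝ) (w : Fin n → ℝ) :
    (Nat.factorial m : ℝ) * (B * (Matrix.diagonal w * Bᵀ)).det
      = ∑ g : Fin m → Fin n, (∏ k, w (g k)) * ((B.submatrix id g).det)^2 := by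
  have h1 := det_mul_expand B (Matrix.diagonal w * Bᵀ)
  have h2 := alt_sum_expand B (fun g => ((Matrix.diagonal w * Bᵀ).submatrix g id).det)
    (fun σ g => sub_permute B w σ g)
  rw [← h1] at h2
  rw [Fintype.card_fin] at h2
  rw [← h2]
  refine Finset.sum_congr rfl fun g _ => ?_
  show (B.submatrix id g).det * ((Matrix.diagonal w * Bᵀ).submatrix g id).det = _
  rw [detC_sub]
  ring

open Finset in
lemma detL_nonneg {m n : ℕ} (B : Matrix (Fin m) (Fin n) ℝ) (w : Fin n → ℝ)
    (hw : ∀ i, 0 < w i) : 0 ≤ (B * (Matrix.diagonal w * Bᵀ)).det := by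
  have h := detL_formula B w
  have hnn : 0 ≤ ∑ g : Fin m → Fin n, (∏ k, w (g k)) * ((B.submatrix id g).det)^2 :=
    Finset.sum_nonneg fun g _ => mul_nonneg
      (Finset.prod_nonneg fun k _ => (hw (g k)).le) (sq_nonneg _)
  rw [← h] at hnn
  have hf : (0:ℝ) < (Nat.factorial m : ℝ) := by positivity
  nlinarith

open Finset in
lemma detL_ne {m n : ℕ} (B : Matrix (Fin m) (Fin n) ℝ) (hrank : B.rank = m)
    (w : Fin n → ℝ) (hw : ∀ i, 0 < w i) :
    (B * (Matrix.diagonal w * Bᵀ)).det ≠ 0 := by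
  intro hdet
  obtain ⟨v, hv0, hv⟩ := (Matrix.exists_mulVec_eq_zero_iff).2 hdet
  set u : Fin n → ℝ := Bᵀ *ᵥ v with hu
  have h0 : v ⬝ᵥ ((B * (Matrix.diagonal w * Bᵀ)) *ᵥ v) = 0 := by rw [hv]; simp
  have h1 : v ⬝ᵥ ((B * (Matrix.diagonal w * Bᵀ)) *ᵥ v) = ∑ k, w k * (u k)^2 := by
    rw [← Matrix.mulVec_mulVec, Matrix.dotProduct_mulVec]
    rw [← Matrix.mulVec_mulVec]
    have hvB : v ᵥ* B = u := by
      rw [hu, Matrix.mulVec_transpose]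
    rw [hvB]
    simp [dotProduct, Matrix.mulVec_diagonal]
    refine Finset.sum_congr rfl fun k _ => by ring
  have hsum : ∑ k, w k * (u k)^2 = 0 := by rw [← h1, h0]
  have huz : u = 0 := by
    funext k
    have hk := (Finset.sum_eq_zero_iff_of_nonneg
      (fun k _ => mul_nonneg (hw k).le (sq_nonneg (u k)))).1 hsum k (Finset.mem_univ k)
    have := (hw k).ne'
    have : (u k)^2 = 0 := by
      rcases mul_eq_zero.1 hk with h | h
      · exact absurd h this
      · exact h
    simpa using pow_eq_zero_iff (n := 2) (by norm_num) |>.1 this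
  have hr : (Bᵀ).rank = m := by rw [Matrix.rank_transpose, hrank]
  have hr2 : Module.finrank ℝ (LinearMap.range (Bᵀ).mulVecLin) = m := hr
  have hrn := LinearMap.finrank_range_add_finrank_ker (Bᵀ).mulVecLin
  rw [hr2] at hrn
  have hdom : Module.finrank ℝ (Fin m → ℝ) = m := by simp
  rw [hdom] at hrn
  have hker0 : Module.finrank ℝ (LinearMap.ker (Bᵀ).mulVecLin) = 0 := by omega
  have hkerbot : LinearMap.ker (Bᵀ).mulVecLin = ⊥ := Submodule.finrank_eq_zero.1 hker0
  have hvker : v ∈ LinearMap.ker (Bᵀ).mulVecLin := by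
    rw [LinearMap.mem_ker, Matrix.mulVecLin_apply, ← hu]; exact huz
  rw [hkerbot] at hvker
  exact hv0 (by simpa using hvker)

/-- The unit column vector `e i`. -/
noncomputable def Eim {n : ℕ} (i : Fin n) : Matrix (Fin n) Unit ℝ :=
  Matrix.of fun l (_ : Unit) => if l = i then (1:ℝ) else 0

/-- The row vector given by the `j`-th column of `B`. -/
noncomputable def Ajm {m n : ℕ} (B : Matrix (Fin m) (Fin n) ℝ) (j : Fin n) :
    Matrix Unit (Fin m) ℝ :=
  Matrix.of fun (_ : Unit) r => B r j

noncomputable def Pm {m n : ℕ} (B : Matrix (Fin m) (Fin n) ℝ) :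
    Matrix (Fin m ⊕ Unit) (Fin n ⊕ Unit) ℝ :=
  Matrix.fromBlocks B 0 0 1

noncomputable def Qm {m n : ℕ} (B : Matrix (Fin m) (Fin n) ℝ) (w : Fin n → ℝ) (i j : Fin n) :
    Matrix (Fin n ⊕ Unit) (Fin m ⊕ Unit) ℝ :=
  Matrix.fromBlocks (Matrix.diagonal w * Bᵀ) (Eim i) (Ajm B j) 0

noncomputable def Ng {m n : ℕ} (B : Matrix (Fin m) (Fin n) ℝ) (w : Fin n → ℝ) (i j : Fin n)
    (g : Fin m → Fin n) : Matrix (Fin m ⊕ Unit) (Fin m ⊕ Unit) ℝ :=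
  (Qm B w i j).submatrix (Sum.elim (Sum.inl ∘ g) Sum.inr) id

open Finset in
lemma border_det {m n : ℕ} (B : Matrix (Fin m) (Fin n) ℝ) (w : Fin n → ℝ) (i j : Fin n) :
    (Nat.factorial m : ℝ) * (Pm B * Qm B w i j).det
      = ∑ g : Fin m → Fin n, (B.submatrix id g).det * (Ng B w i j g).det := by
  have h1 := det_mul_expand (Pm B) (Qm B w i j)
  set S : Finset ((Fin m ⊕ Unit) → (Fin n ⊕ Unit)) :=
    Finset.univ.image (fun g : Fin m → Fin n => Sum.elim (Sum.inl ∘ g) Sum.inr) with hS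
  have h2 : ∑ G : (Fin m ⊕ Unit) → (Fin n ⊕ Unit),
        (∏ r, Pm B r (G r)) * ((Qm B w i j).submatrix G id).det
      = ∑ G ∈ S, (∏ r, Pm B r (G r)) * ((Qm B w i j).submatrix G id).det := by
    refine (Finset.sum_subset (Finset.subset_univ S) ?_).symm
    intro G _ hGS
    by_cases hGr : G (Sum.inr ()) = Sum.inr ()
    · by_cases hGl : ∀ k, ∃ l, G (Sum.inl k) = Sum.inl l
      · exfalso
        apply hGS
        rw [hS, Finset.mem_image]
        refine ⟨fun k => (hGl k).choose, Finset.mem_univ _, ?_⟩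
        funext r
        cases r with
        | inl k => exact ((hGl k).choose_spec).symm
        | inr u => cases u; exact hGr.symm
      · push_neg at hGl
        obtain ⟨k, hk⟩ := hGl
        have hGk : G (Sum.inl k) = Sum.inr () := by
          cases hGkk : G (Sum.inl k) with
          | inl l => exact absurd hGkk (by intro h; exact (hk l) h)
          | inr u => cases u; rfl
        have : Pm B (Sum.inl k) (G (Sum.inl k)) = 0 := by
          rw [hGk]; simp [Pm]
        rw [Finset.prod_eq_zero (Finset.mem_univ (Sum.inl k)) this, zero_mul]
    · have hGk : ∃ l, G (Sum.inr ()) = Sum.inl l := by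
        cases hGkk : G (Sum.inr ()) with
        | inl l => exact ⟨l, rfl⟩
        | inr u => cases u; exact absurd hGkk hGr
      obtain ⟨l, hl⟩ := hGk
      have : Pm B (Sum.inr ()) (G (Sum.inr ())) = 0 := by
        rw [hl]; simp [Pm]
      rw [Finset.prod_eq_zero (Finset.mem_univ (Sum.inr ())) this, zero_mul]
  have hinj : Function.Injective
      (fun g : Fin m → Fin n =>
        (Sum.elim (Sum.inl ∘ g) Sum.inr : Fin m ⊕ Unit → Fin n ⊕ Unit)) := by
    intro g g' h
    funext k
    have := congrFun h (Sum.inl k)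
    simpa using this
  have h3 : ∑ G ∈ S, (∏ r, Pm B r (G r)) * ((Qm B w i j).submatrix G id).det
      = ∑ g : Fin m → Fin n,
          (∏ r, Pm B r (Sum.elim (Sum.inl ∘ g) Sum.inr r)) * (Ng B w i j g).det := by
    rw [hS, Finset.sum_image (fun a _ b _ h => hinj h)]
    rfl
  have h4 : ∀ g : Fin m → Fin n,
      (∏ r, Pm B r (Sum.elim (Sum.inl ∘ g) Sum.inr r)) = ∏ k, B k (g k) := by
    intro g
    rw [Fintype.prod_sum_type]
    simp [Pm]
  have h5 : (Pm B * Qm B w i j).det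
      = ∑ g : Fin m → Fin n, (∏ k, B k (g k)) * (Ng B w i j g).det := by
    rw [h1, h2, h3]
    exact Finset.sum_congr rfl fun g _ => by rw [h4]
  have hF : ∀ (σ : Equiv.Perm (Fin m)) (g : Fin m → Fin n),
      (Ng B w i j (g ∘ σ)).det = ((Equiv.Perm.sign σ : ℤ) : ℝ) * (Ng B w i j g).det := by
    intro σ g
    have hsub : Ng B w i j (g ∘ σ)
        = (Ng B w i j g).submatrix (Equiv.sumCongr σ (Equiv.refl Unit)) id := by
      ext r c
      cases r with
      | inl k => rfl
      | inr u => rfl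
    rw [hsub]
    have hperm := Matrix.det_permute ((Equiv.sumCongr σ (Equiv.refl Unit)) :
      Equiv.Perm (Fin m ⊕ Unit)) (Ng B w i j g)
    rw [hperm]
    congr 1
    rw [Equiv.Perm.sign_sumCongr]
    simp
  have h6 := alt_sum_expand B (fun g => (Ng B w i j g).det) hF
  rw [Fintype.card_fin] at h6
  rw [h6, ← h5]

set_option linter.unnecessarySeqFocus false in
set_option linter.unusedTactic false in
open Finset in
lemma border_eval {m n : ℕ} (B : Matrix (Fin m) (Fin n) ℝ) (w : Fin n → ℝ) (i j : Fin n)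
    (p : Fin m → ℝ)
    (hp : (B * Matrix.diagonal w * Bᵀ) *ᵥ p = Bᵀ i) :
    (Pm B * Qm B w i j).det
      = (B * (Matrix.diagonal w * Bᵀ)).det * (-((Bᵀ *ᵥ p) j)) := by
  have hPQ : Pm B * Qm B w i j
      = Matrix.fromBlocks (B * (Matrix.diagonal w * Bᵀ)) (B * Eim i) (Ajm B j) 0 := by
    rw [Pm, Qm, Matrix.fromBlocks_multiply]
    congr 1 <;> simp
  set X : Matrix (Fin m) Unit ℝ := Matrix.of fun k (_ : Unit) => -p k with hX
  set E : Matrix (Fin m ⊕ Unit) (Fin m ⊕ Unit) ℝ := Matrix.fromBlocks 1 X 0 1 with hE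
  have hdetE : E.det = 1 := by
    rw [hE, Matrix.det_fromBlocks_zero₂₁]
    simp
  have hTR : B * (Matrix.diagonal w * Bᵀ) * X + B * Eim i = 0 := by
    ext r u
    have h3 : ((B * (Matrix.diagonal w * Bᵀ)) *ᵥ p) r = B r i := by
      rw [← Matrix.mul_assoc, hp]
      rfl
    have h1 : (B * (Matrix.diagonal w * Bᵀ) * X) r u
        = -(((B * (Matrix.diagonal w * Bᵀ)) *ᵥ p) r) := by
      simp [Matrix.mul_apply, hX, Matrix.mulVec, dotProduct, mul_neg]
    have h2 : (B * Eim i) r u = B r i := by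
      simp [Matrix.mul_apply, Eim, mul_ite, Finset.sum_ite_eq']
    rw [Matrix.add_apply, h1, h2, h3]
    simp
  have hBR : Ajm B j * X = Matrix.of fun (_ : Unit) (_ : Unit) => -((Bᵀ *ᵥ p) j) := by
    ext u v
    have : (Ajm B j * X) u v = -((Bᵀ *ᵥ p) j) := by
      simp [Matrix.mul_apply, Ajm, hX, Matrix.mulVec, dotProduct, Matrix.transpose_apply,
        mul_neg, mul_comm]
    simpa using this
  have hME : (Pm B * Qm B w i j) * E
      = Matrix.fromBlocks (B * (Matrix.diagonal w * Bᵀ)) 0 (Ajm B j)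
          (Matrix.of fun (_ : Unit) (_ : Unit) => -((Bᵀ *ᵥ p) j)) := by
    rw [hPQ, hE, Matrix.fromBlocks_multiply]
    simp [hTR, hBR]
  have hdet1 : ((Pm B * Qm B w i j) * E).det = (Pm B * Qm B w i j).det := by
    rw [Matrix.det_mul, hdetE, mul_one]
  rw [hME] at hdet1
  rw [Matrix.det_fromBlocks_zero₁₂] at hdet1
  rw [← hdet1]
  congr 1
  rw [Matrix.det_unique]
  rfl

open Finset in
lemma rmat_sub_det {m n : ℕ} (A : Matrix (Fin m) (Fin n) ℤ) (h : Fin m → Fin n) :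
    ((rmat A).submatrix id h).det = (((A.submatrix id h).det : ℤ) : ℝ) := by
  have h1 : (rmat A).submatrix id h = (A.submatrix id h).map (Int.cast : ℤ → ℝ) := by
    rw [rmat, Matrix.submatrix_map]
  rw [h1, show (A.submatrix id h).map (Int.cast : ℤ → ℝ)
      = (Int.castRingHom ℝ).mapMatrix (A.submatrix id h) from rfl,
    ← RingHom.map_det]
  rfl

open Finset in
lemma D_ge_one {m n : ℕ} {A : Matrix (Fin m) (Fin n) ℤ} {𝒟 : ℝ}
    (hD : IsGreatest (subdets A) 𝒟) : 1 ≤ 𝒟 := by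
  have : (1:ℝ) ∈ subdets A := by
    refine ⟨0, Fin.elim0, Fin.elim0, fun x => x.elim0, fun x => x.elim0, ?_⟩
    rw [Matrix.det_fin_zero]
    norm_num
  exact hD.2 this

open Finset in
lemma subdet_le {m n : ℕ} {A : Matrix (Fin m) (Fin n) ℤ} {𝒟 : ℝ}
    (hD : IsGreatest (subdets A) 𝒟)
    (h : Fin m → Fin n) : |((rmat A).submatrix id h).det| ≤ 𝒟 := by
  by_cases hinj : Function.Injective h
  · refine hD.2 ⟨m, id, h, Function.injective_id, hinj, ?_⟩
    rw [rmat_sub_det]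
  · obtain ⟨a, b, hab, hne⟩ : ∃ a b, h a = h b ∧ a ≠ b := by
      rw [Function.Injective] at hinj
      push_neg at hinj
      obtain ⟨a, b, h1, h2⟩ := hinj
      exact ⟨a, b, h1, h2⟩
    have : ((rmat A).submatrix id h).det = 0 :=
      Matrix.det_zero_of_column_eq hne (fun k => by simp [Matrix.submatrix, hab])
    rw [this, abs_zero]
    linarith [D_ge_one hD]

open Finset in
lemma detBg_one_le {m n : ℕ} {A : Matrix (Fin m) (Fin n) ℤ} (g : Fin m → Fin n)
    (hz : ((rmat A).submatrix id g).det ≠ 0) :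
    1 ≤ |((rmat A).submatrix id g).det| := by
  rw [rmat_sub_det] at hz ⊢
  rw [← Int.cast_abs]
  have : (A.submatrix id g).det ≠ 0 := fun h => hz (by rw [h]; simp)
  exact_mod_cast Int.one_le_abs this

open Finset in
lemma Ng_bound {m n : ℕ} (A : Matrix (Fin m) (Fin n) ℤ) {𝒟 : ℝ}
    (hD : IsGreatest (subdets A) 𝒟)
    (w : Fin n → ℝ) (hw : ∀ i, 0 < w i) (i j : Fin n) (g : Fin m → Fin n) :
    w i * |((rmat A).submatrix id g).det * (Ng (rmat A) w i j g).det|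
      ≤ 𝒟 * ((∏ k, w (g k)) * (((rmat A).submatrix id g).det)^2) := by
  set B := rmat A with hB
  have hD0 : (0:ℝ) < 𝒟 := lt_of_lt_of_le one_pos (D_ge_one hD)
  have hprodpos : (0:ℝ) < ∏ k, w (g k) := Finset.prod_pos fun k _ => hw (g k)
  by_cases hz : (B.submatrix id g).det = 0
  · rw [hz]
    simp only [zero_mul, abs_zero, mul_zero]
    positivity
  have hinj : Function.Injective g := by
    intro a b hab
    by_contra hne
    exact hz (Matrix.det_zero_of_column_eq hne (fun k => by simp [Matrix.submatrix, hab]))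
  by_cases hi : ∀ k, g k ≠ i
  · have hNg : (Ng B w i j g).det = 0 := by
      apply Matrix.det_eq_zero_of_column_eq_zero (Sum.inr ())
      intro r
      cases r with
      | inl k => simp [Ng, Qm, Matrix.fromBlocks_apply₁₂, Eim, hi k]
      | inr u => simp [Ng, Qm]
    rw [hNg, mul_zero, abs_zero, mul_zero]
    positivity
  push_neg at hi
  obtain ⟨k₀, hk₀⟩ := hi
  set g' : Fin m → Fin n := Function.update g k₀ j with hg'
  set Y : Matrix (Fin m) (Fin m) ℝ :=
    Matrix.of fun k r => if k = k₀ then B r j else w (g k) * B r (g k) with hY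
  set R : Matrix Unit (Fin m) ℝ := Matrix.of fun (_ : Unit) r => w i * B r i with hR
  have hN2 : (Ng B w i j g).submatrix (Equiv.swap (Sum.inl k₀) (Sum.inr ())) id
      = Matrix.fromBlocks Y 0 R 1 := by
    ext r c
    cases r with
    | inl k =>
      by_cases hkk : k = k₀
      · subst hkk
        have hsw : Equiv.swap (Sum.inl k : Fin m ⊕ Unit) (Sum.inr ()) (Sum.inl k)
            = Sum.inr () := Equiv.swap_apply_left _ _
        cases c with
        | inl r' => simp [Matrix.submatrix, hsw, Ng, Qm, Ajm, Y]
        | inr u => simp [Matrix.submatrix, hsw, Ng, Qm]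
      · have hsw : Equiv.swap (Sum.inl k₀ : Fin m ⊕ Unit) (Sum.inr ()) (Sum.inl k)
            = Sum.inl k := Equiv.swap_apply_of_ne_of_ne (by simpa using hkk) (by simp)
        have hgki : g k ≠ i := fun h => hkk (hinj (h.trans hk₀.symm))
        cases c with
        | inl r' => simp [Matrix.submatrix, hsw, Ng, Qm, Y, hkk, Matrix.diagonal_mul]
        | inr u => simp [Matrix.submatrix, hsw, Ng, Qm, Eim, hgki]
    | inr u =>
      cases u
      have hsw : Equiv.swap (Sum.inl k₀ : Fin m ⊕ Unit) (Sum.inr ()) (Sum.inr ())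
          = Sum.inl k₀ := Equiv.swap_apply_right _ _
      cases c with
      | inl r' => simp [Matrix.submatrix, hsw, Ng, Qm, R, hk₀, Matrix.diagonal_mul]
      | inr u' => simp [Matrix.submatrix, hsw, Ng, Qm, Eim, hk₀]
  have habsNg : |(Ng B w i j g).det| = |Y.det| := by
    have hperm := Matrix.det_permute
      ((Equiv.swap (Sum.inl k₀ : Fin m ⊕ Unit) (Sum.inr ()))) (Ng B w i j g)
    rw [hN2] at hperm
    rw [Matrix.det_fromBlocks_zero₁₂, Matrix.det_one, mul_one] at hperm
    have hsign : Equiv.Perm.sign (Equiv.swap (Sum.inl k₀ : Fin m ⊕ Unit) (Sum.inr ()))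
        = -1 := Equiv.Perm.sign_swap (by simp)
    rw [hsign] at hperm
    have : Y.det = -(Ng B w i j g).det := by
      rw [hperm]; simp
    rw [this, abs_neg]
  have hYfact : Y = Matrix.diagonal (Function.update (fun k => w (g k)) k₀ 1)
      * (B.submatrix id g')ᵀ := by
    ext k r
    by_cases hkk : k = k₀
    · subst hkk
      simp [Y, Matrix.diagonal_mul, hg', Matrix.submatrix]
    · simp [Y, Matrix.diagonal_mul, hg', Matrix.submatrix, hkk,
        Function.update_of_ne hkk]
  have hdetY : Y.det = (∏ k ∈ Finset.univ \ {k₀}, w (g k)) * (B.submatrix id g').det := by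
    rw [hYfact, Matrix.det_mul, Matrix.det_diagonal, Matrix.det_transpose]
    congr 1
    have := Finset.prod_update_of_mem (Finset.mem_univ k₀) (fun k => w (g k)) (1:ℝ)
    rw [this, one_mul]
  have hprodsub : (0:ℝ) ≤ ∏ k ∈ Finset.univ \ {k₀}, w (g k) :=
    Finset.prod_nonneg fun k _ => (hw (g k)).le
  have hwprod : w i * ∏ k ∈ Finset.univ \ {k₀}, w (g k) = ∏ k, w (g k) := by
    rw [← hk₀]
    exact (Finset.prod_eq_mul_prod_sdiff_singleton_of_mem (Finset.mem_univ k₀)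
      (fun k => w (g k))).symm
  have hYb : w i * |Y.det| ≤ (∏ k, w (g k)) * 𝒟 := by
    rw [hdetY, abs_mul, abs_of_nonneg hprodsub, ← mul_assoc, hwprod]
    exact mul_le_mul_of_nonneg_left (subdet_le hD g') hprodpos.le
  have h1le : 1 ≤ |(B.submatrix id g).det| := detBg_one_le g hz
  calc w i * |(B.submatrix id g).det * (Ng B w i j g).det|
      = |(B.submatrix id g).det| * (w i * |(Ng B w i j g).det|) := by
        rw [abs_mul]; ring
    _ ≤ |(B.submatrix id g).det| * ((∏ k, w (g k)) * 𝒟) := by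
        apply mul_le_mul_of_nonneg_left _ (abs_nonneg _)
        rw [habsNg]; exact hYb
    _ ≤ (|(B.submatrix id g).det| * |(B.submatrix id g).det|) * ((∏ k, w (g k)) * 𝒟) := by
        apply mul_le_mul_of_nonneg_right _ (by positivity)
        nlinarith [abs_nonneg (B.submatrix id g).det]
    _ = 𝒟 * ((∏ k, w (g k)) * ((B.submatrix id g).det)^2) := by
        rw [← abs_mul, ← sq, abs_sq]
        ring

open Finset in
theorem subdet_bound_on_column_solution {m n : ℕ} (A : Matrix (Fin m) (Fin n) ℤ)
    (hrank : (rmat A).rank = m)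
    (𝒟 : ℝ) (hD : IsGreatest (subdets A) 𝒟)
    (w : Fin n → ℝ) (hw : ∀ i, 0 < w i)
    (i : Fin n) (p : Fin m → ℝ)
    (hp : (rmat A * Matrix.diagonal w * (rmat A)ᵀ) *ᵥ p = (rmat A)ᵀ i) :
    ∀ j, |((rmat A)ᵀ *ᵥ p) j| ≤ 𝒟 / w i := by
  intro j
  set B := rmat A with hB
  have hLpos : 0 < (B * (Matrix.diagonal w * Bᵀ)).det :=
    lt_of_le_of_ne (detL_nonneg B w hw) (Ne.symm (detL_ne B hrank w hw))
  have hfact : (0:ℝ) < (Nat.factorial m : ℝ) := by positivity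
  have hbd := border_det B w i j
  have heval := border_eval B w i j p hp
  -- sum comparison
  have hsum : w i * |∑ g : Fin m → Fin n, (B.submatrix id g).det * (Ng B w i j g).det|
      ≤ 𝒟 * ((Nat.factorial m : ℝ) * (B * (Matrix.diagonal w * Bᵀ)).det) := by
    calc w i * |∑ g : Fin m → Fin n, (B.submatrix id g).det * (Ng B w i j g).det|
        ≤ w i * ∑ g : Fin m → Fin n, |(B.submatrix id g).det * (Ng B w i j g).det| := by
          exact mul_le_mul_of_nonneg_left (Finset.abs_sum_le_sum_abs _ _) (hw i).le
      _ = ∑ g : Fin m → Fin n, w i * |(B.submatrix id g).det * (Ng B w i j g).det| := by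
          rw [Finset.mul_sum]
      _ ≤ ∑ g : Fin m → Fin n, 𝒟 * ((∏ k, w (g k)) * ((B.submatrix id g).det)^2) :=
          Finset.sum_le_sum fun g _ => Ng_bound A hD w hw i j g
      _ = 𝒟 * ∑ g : Fin m → Fin n, (∏ k, w (g k)) * ((B.submatrix id g).det)^2 := by
          rw [Finset.mul_sum]
      _ = 𝒟 * ((Nat.factorial m : ℝ) * (B * (Matrix.diagonal w * Bᵀ)).det) := by
          rw [detL_formula]
  rw [← hbd] at hsum
  rw [heval] at hsum
  have habs : |(Nat.factorial m : ℝ) * ((B * (Matrix.diagonal w * Bᵀ)).det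
      * (-((Bᵀ *ᵥ p) j)))|
      = (Nat.factorial m : ℝ) * ((B * (Matrix.diagonal w * Bᵀ)).det * |(Bᵀ *ᵥ p) j|) := by
    rw [abs_mul, abs_mul, abs_neg, abs_of_pos hfact, abs_of_pos hLpos]
  rw [habs] at hsum
  have hkey : w i * |(Bᵀ *ᵥ p) j| ≤ 𝒟 := by
    have hpos : 0 < (Nat.factorial m : ℝ) * (B * (Matrix.diagonal w * Bᵀ)).det :=
      mul_pos hfact hLpos
    nlinarith [abs_nonneg ((Bᵀ *ᵥ p) j)]
  rw [le_div_iff₀ (hw i)]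
  linarith [hkey]
end

section
/- Suppose y ∈ ℝⁿ is feasible, i.e., A y = b and y ≥ 0. Then for every x ∈ ℝⁿ with x > 0 componentwise, the vector q = W Aᵀ L⁻¹ b (where W = diag(x₁/c₁,…,xₙ/cₙ) and L = A W Aᵀ) satisfies ‖q‖_∞ ≤ 𝒟 · ‖y‖₁, where 𝒟 = max{|det A'| : A' is a square submatrix of A}. -/
open Matrix Filter Set Topology

/- ### Auxiliary lemmas -/

/-- Multilinear expansion of the determinant of a matrix whose rows are linear
combinations of the rows of `Bᵀ`. -/
theorem detRow_expand {m n : ℕ} (B : Matrix (Fin m) (Fin n) ℝ) (c : Fin m → Fin n → ℝ) :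
    (Matrix.of fun a b => ∑ k, c a k * B b k).det
      = ∑ f : Fin m → Fin n, (∏ a, c a (f a)) * (B.submatrix id f).det := by
  have h1 : (Matrix.of fun a b => ∑ k, c a k * B b k).det
      = Matrix.detRowAlternating.toMultilinearMap
          (fun a => ∑ k : Fin n, c a k • (fun b => B b k)) := by
    have h0 : (Matrix.of fun a b => ∑ k, c a k * B b k : Matrix (Fin m) (Fin m) ℝ)
        = fun a => ∑ k : Fin n, c a k • (fun b => B b k) := by
      funext a b
      simp [Finset.sum_apply]
    rw [show (Matrix.of fun a b => ∑ k, c a k * B b k).det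
        = Matrix.detRowAlternating.toMultilinearMap (Matrix.of fun a b => ∑ k, c a k * B b k)
        from rfl, h0]
  rw [h1, (Matrix.detRowAlternating.toMultilinearMap).map_sum]
  congr 1
  funext f
  rw [MultilinearMap.map_smul_univ]
  have h2 : Matrix.detRowAlternating.toMultilinearMap (fun a => (fun b => B b (f a)))
      = (B.submatrix id f).det := by
    rw [← Matrix.det_transpose]
    rfl
  rw [h2]; simp

/-- The signed sum over permutations reproducing the determinant of a column submatrix. -/
theorem sumperm {m n : ℕ} (B : Matrix (Fin m) (Fin n) ℝ) (h : Fin m → Fin n) :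
    ∑ σ : Equiv.Perm (Fin m), ((Equiv.Perm.sign σ : ℤ) : ℝ) * ∏ a, B a (h (σ a))
      = (B.submatrix id h).det := by
  rw [← Matrix.det_transpose, Matrix.det_apply']
  simp [Matrix.submatrix_apply, Matrix.transpose_apply]

/-- Column selection by a map `Fin m ≃o s` for a subset `s` of size `m`. -/
noncomputable def gofp {m n : ℕ} (s : {s : Finset (Fin n) // s.card = m}) : Fin m → Fin n :=
  fun a => s.1.orderEmbOfFin s.2 a

/-- Grouping a sum over all column selections into subsets and permutations. -/
theorem group_sum {m n : ℕ} (B : Matrix (Fin m) (Fin n) ℝ) (G : (Fin m → Fin n) → ℝ) :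
    ∑ f : Fin m → Fin n, G f * (B.submatrix id f).det
      = ∑ s : {s : Finset (Fin n) // s.card = m}, ∑ σ : Equiv.Perm (Fin m),
          G (gofp s ∘ σ) * (B.submatrix id (gofp s ∘ σ)).det := by
  classical
  set e : {s : Finset (Fin n) // s.card = m} × Equiv.Perm (Fin m) → (Fin m → Fin n) :=
    fun p => gofp p.1 ∘ p.2 with he
  have himg : ∀ (s : Finset (Fin n)) (hs : s.card = m) (σ : Equiv.Perm (Fin m)),
      Finset.image (fun a => s.orderEmbOfFin hs (σ a)) Finset.univ = s := by
    intro s hs σ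
    have hinj : Function.Injective (fun a => s.orderEmbOfFin hs (σ a)) :=
      fun a b h => σ.injective ((s.orderEmbOfFin hs).injective h)
    apply Finset.eq_of_subset_of_card_le
    · intro k hk
      rw [Finset.mem_image] at hk
      obtain ⟨a, -, rfl⟩ := hk
      exact Finset.orderEmbOfFin_mem s hs (σ a)
    · rw [hs, Finset.card_image_of_injective _ hinj, Finset.card_univ, Fintype.card_fin]
  have einj : Function.Injective e := by
    rintro ⟨⟨s, hs⟩, σ⟩ ⟨⟨t, ht⟩, τ⟩ hpq
    have hst : s = t := by
      rw [← himg s hs σ, ← himg t ht τ]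
      exact Finset.image_congr (fun a _ => congrFun hpq a)
    subst hst
    have hστ : σ = τ :=
      Equiv.ext fun a => (s.orderEmbOfFin hs).injective (congrFun hpq a)
    simp [hστ]
  have hcov : Finset.image e Finset.univ
      = Finset.univ.filter (fun f => Function.Injective f) := by
    ext f
    simp only [Finset.mem_image, Finset.mem_filter, Finset.mem_univ, true_and]
    constructor
    · rintro ⟨⟨⟨s, hs⟩, σ⟩, -, rfl⟩
      exact ((s.orderEmbOfFin hs).injective.comp σ.injective)
    · intro hf
      have hs : (Finset.image f Finset.univ).card = m := by
        rw [Finset.card_image_of_injective _ hf, Finset.card_univ, Fintype.card_fin]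
      set s : Finset (Fin n) := Finset.image f Finset.univ with hsdef
      have hmem : ∀ a, f a ∈ s := fun a => Finset.mem_image_of_mem f (Finset.mem_univ a)
      have hφ : Function.Injective
          (fun a : Fin m => (s.orderIsoOfFin hs).symm ⟨f a, hmem a⟩) := by
        intro a b hab
        have hab' : (s.orderIsoOfFin hs).symm ⟨f a, hmem a⟩
            = (s.orderIsoOfFin hs).symm ⟨f b, hmem b⟩ := hab
        exact hf (by simpa using congrArg (fun z => (s.orderIsoOfFin hs z).val) hab')
      refine ⟨⟨⟨s, hs⟩, Equiv.ofBijective _ (Finite.injective_iff_bijective.mp hφ)⟩, ?_⟩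
      funext a
      show s.orderEmbOfFin hs ((s.orderIsoOfFin hs).symm ⟨f a, hmem a⟩) = f a
      rw [← Finset.coe_orderIsoOfFin_apply]
      simp
  have h1 : ∑ f : Fin m → Fin n, G f * (B.submatrix id f).det
      = ∑ f ∈ Finset.univ.filter (fun f => Function.Injective f),
          G f * (B.submatrix id f).det := by
    refine (Finset.sum_filter_of_ne ?_).symm
    intro f _ hne
    by_contra hni
    rw [Function.not_injective_iff] at hni
    obtain ⟨a, b, hab, hne'⟩ := hni
    exact hne (by rw [Matrix.det_zero_of_column_eq hne'
      (fun k => by simp [Matrix.submatrix_apply, hab]), mul_zero])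
  rw [h1, ← hcov, Finset.sum_image (fun p _ q _ h => einj h), Fintype.sum_prod_type]

/-- Permuting the selected columns multiplies the determinant by the sign. -/
theorem det_comp_perm {m n : ℕ} (B : Matrix (Fin m) (Fin n) ℝ) (g : Fin m → Fin n)
    (σ : Equiv.Perm (Fin m)) :
    (B.submatrix id (g ∘ σ)).det = ((Equiv.Perm.sign σ : ℤ) : ℝ) * (B.submatrix id g).det := by
  have h : B.submatrix id (g ∘ σ) = (B.submatrix id g).submatrix id σ := by
    rw [Matrix.submatrix_submatrix]
    rfl
  rw [h, Matrix.det_permute']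

/-- Cauchy–Binet for `B · diag w · Bᵀ`. -/
theorem detL_eq {m n : ℕ} (B : Matrix (Fin m) (Fin n) ℝ) (w : Fin n → ℝ) :
    (B * Matrix.diagonal w * Bᵀ).det
      = ∑ s : {s : Finset (Fin n) // s.card = m},
          (∏ a, w (gofp s a)) * ((B.submatrix id (gofp s)).det) ^ 2 := by
  have hM : (B * Matrix.diagonal w * Bᵀ)
      = Matrix.of (fun a b => ∑ k, (w k * B a k) * B b k) := by
    ext a b
    rw [Matrix.of_apply, Matrix.mul_apply]
    exact Finset.sum_congr rfl fun k _ => by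
      rw [Matrix.transpose_apply, Matrix.mul_diagonal]; ring
  rw [hM, detRow_expand, group_sum B (fun f => ∏ a, w (f a) * B a (f a))]
  refine Finset.sum_congr rfl fun s _ => ?_
  have key : ∀ σ : Equiv.Perm (Fin m),
      (∏ a, w ((gofp s ∘ σ) a) * B a ((gofp s ∘ σ) a))
        * (B.submatrix id (gofp s ∘ σ)).det
      = ((∏ a, w (gofp s a)) * (B.submatrix id (gofp s)).det)
        * (((Equiv.Perm.sign σ : ℤ) : ℝ) * ∏ a, B a (gofp s (σ a))) := by
    intro σ
    rw [Finset.prod_mul_distrib, det_comp_perm]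
    have hw : (∏ a, w ((gofp s ∘ σ) a)) = ∏ a, w (gofp s a) :=
      Equiv.prod_comp σ (fun a => w (gofp s a))
    rw [hw]
    simp only [Function.comp_apply]
    ring
  calc ∑ σ : Equiv.Perm (Fin m), (∏ a, w ((gofp s ∘ σ) a) * B a ((gofp s ∘ σ) a))
        * (B.submatrix id (gofp s ∘ σ)).det
      = ((∏ a, w (gofp s a)) * (B.submatrix id (gofp s)).det)
        * ∑ σ : Equiv.Perm (Fin m), ((Equiv.Perm.sign σ : ℤ) : ℝ)
            * ∏ a, B a (gofp s (σ a)) := by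
        rw [Finset.mul_sum]
        exact Finset.sum_congr rfl fun σ _ => key σ
    _ = (∏ a, w (gofp s a)) * ((B.submatrix id (gofp s)).det) ^ 2 := by
        rw [sumperm]
        ring

/-- The mixed Cauchy–Binet formula for the adjugate-type sums. -/
theorem mixed_eq {m n : ℕ} (B : Matrix (Fin m) (Fin n) ℝ) (w : Fin n → ℝ) (i j : Fin n) :
    w i * ∑ b₀, B b₀ j * ((B * Matrix.diagonal w * Bᵀ).updateRow b₀ (fun k => B k i)).det
      = ∑ s : {s : Finset (Fin n) // s.card = m},
          (∏ a, w (gofp s a)) * ((B.submatrix id (gofp s)).det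
            * (if i ∈ s.1 then
                (B.submatrix id (fun c => if gofp s c = i then j else gofp s c)).det
              else 0)) := by
  classical
  have hU : ∀ b₀ : Fin m, ((B * Matrix.diagonal w * Bᵀ).updateRow b₀ (fun k => B k i)).det
      = ∑ f : Fin m → Fin n,
          (∏ a, (if a = b₀ then (if f a = i then (1:ℝ) else 0) else w (f a) * B a (f a)))
            * (B.submatrix id f).det := by
    intro b₀
    have hmat : ((B * Matrix.diagonal w * Bᵀ).updateRow b₀ (fun k => B k i))
        = Matrix.of (fun a b => ∑ k,
            (if a = b₀ then (if k = i then (1:ℝ) else 0) else w k * B a k) * B b k) := by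
      ext a b
      by_cases hab : a = b₀
      · subst hab
        rw [Matrix.updateRow_self, Matrix.of_apply]
        simp [ite_mul]
      · rw [Matrix.updateRow_ne hab, Matrix.of_apply, Matrix.mul_apply]
        refine Finset.sum_congr rfl fun k _ => ?_
        rw [Matrix.transpose_apply, Matrix.mul_diagonal, if_neg hab]
        ring
    rw [hmat, detRow_expand]
  have hP : ∀ (b₀ : Fin m) (f : Fin m → Fin n),
      (∏ a, (if a = b₀ then (if f a = i then (1:ℝ) else 0) else w (f a) * B a (f a)))
        = if f b₀ = i then ∏ a ∈ Finset.univ.erase b₀, (w (f a) * B a (f a)) else 0 := by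
    intro b₀ f
    rw [← Finset.mul_prod_erase Finset.univ _ (Finset.mem_univ b₀)]
    rw [if_pos rfl]
    have : (∏ a ∈ Finset.univ.erase b₀,
        (if a = b₀ then (if f a = i then (1:ℝ) else 0) else w (f a) * B a (f a)))
        = ∏ a ∈ Finset.univ.erase b₀, (w (f a) * B a (f a)) :=
      Finset.prod_congr rfl fun a ha => by rw [if_neg (Finset.ne_of_mem_erase ha)]
    rw [this, ite_mul, one_mul, zero_mul]
  set G : (Fin m → Fin n) → ℝ := fun f => ∑ b₀, (if f b₀ = i then
      (∏ a, w (f a)) * (B b₀ j * ∏ a ∈ Finset.univ.erase b₀, B a (f a)) else 0) with hGdef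
  have hLHS : w i * ∑ b₀, B b₀ j
        * ((B * Matrix.diagonal w * Bᵀ).updateRow b₀ (fun k => B k i)).det
      = ∑ f : Fin m → Fin n, G f * (B.submatrix id f).det := by
    have hstep : ∀ b₀ : Fin m, w i * (B b₀ j
          * ((B * Matrix.diagonal w * Bᵀ).updateRow b₀ (fun k => B k i)).det)
        = ∑ f : Fin m → Fin n, (if f b₀ = i then
            (∏ a, w (f a)) * (B b₀ j * ∏ a ∈ Finset.univ.erase b₀, B a (f a)) else 0)
              * (B.submatrix id f).det := by
      intro b₀
      rw [hU b₀, Finset.mul_sum, Finset.mul_sum]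
      refine Finset.sum_congr rfl fun f _ => ?_
      rw [hP b₀ f]
      by_cases hfb : f b₀ = i
      · rw [if_pos hfb, if_pos hfb]
        have hww : (∏ a, w (f a)) = w i * ∏ a ∈ Finset.univ.erase b₀, w (f a) := by
          rw [← Finset.mul_prod_erase Finset.univ (fun a => w (f a)) (Finset.mem_univ b₀), hfb]
        rw [hww, Finset.prod_mul_distrib]
        ring
      · rw [if_neg hfb, if_neg hfb]
        ring
    rw [Finset.mul_sum]
    rw [Finset.sum_congr rfl (fun b₀ _ => hstep b₀), Finset.sum_comm]
    exact Finset.sum_congr rfl fun f _ => (Finset.sum_mul _ _ _).symm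
  rw [hLHS, group_sum B G]
  refine Finset.sum_congr rfl fun s _ => ?_
  have hginj : Function.Injective (gofp s) := fun a b h => (s.1.orderEmbOfFin s.2).injective h
  by_cases hi : i ∈ s.1
  · obtain ⟨c₀, hc₀⟩ : ∃ c₀, gofp s c₀ = i := by
      have hr := Finset.range_orderEmbOfFin s.1 s.2
      have : i ∈ Set.range (s.1.orderEmbOfFin s.2) := by
        rw [hr]; exact hi
      exact this
    rw [if_pos hi]
    have hG : ∀ σ : Equiv.Perm (Fin m), G (gofp s ∘ σ)
        = (∏ a, w (gofp s a))
          * ∏ a, B a (if gofp s (σ a) = i then j else gofp s (σ a)) := by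
      intro σ
      simp only [hGdef]
      rw [Finset.sum_eq_single (σ.symm c₀)]
      · rw [if_pos (by simp [Function.comp_apply, hc₀])]
        have hw : (∏ a, w ((gofp s ∘ σ) a)) = ∏ a, w (gofp s a) :=
          Equiv.prod_comp σ (fun a => w (gofp s a))
        rw [hw]
        congr 1
        rw [← Finset.mul_prod_erase Finset.univ
          (fun a => B a (if gofp s (σ a) = i then j else gofp s (σ a)))
          (Finset.mem_univ (σ.symm c₀))]
        congr 1
        · simp [hc₀]
        · refine Finset.prod_congr rfl fun a ha => ?_
          have hne : σ a ≠ c₀ := by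
            intro h
            exact Finset.ne_of_mem_erase ha (by rw [← σ.symm_apply_apply a, h])
          rw [if_neg (fun h => hne (hginj (h.trans hc₀.symm)))]
          rfl
      · intro b₀ _ hb₀
        rw [if_neg]
        intro h
        have : σ b₀ = c₀ := hginj ((by simpa using h : gofp s (σ b₀) = i).trans hc₀.symm)
        exact hb₀ (by rw [← this, σ.symm_apply_apply])
      · intro h
        exact absurd (Finset.mem_univ _) h
    calc ∑ σ : Equiv.Perm (Fin m), G (gofp s ∘ σ) * (B.submatrix id (gofp s ∘ σ)).det
        = ((∏ a, w (gofp s a)) * (B.submatrix id (gofp s)).det)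
          * ∑ σ : Equiv.Perm (Fin m), ((Equiv.Perm.sign σ : ℤ) : ℝ)
              * ∏ a, B a (if gofp s (σ a) = i then j else gofp s (σ a)) := by
          rw [Finset.mul_sum]
          refine Finset.sum_congr rfl fun σ _ => ?_
          rw [hG σ, det_comp_perm]
          ring
      _ = (∏ a, w (gofp s a)) * ((B.submatrix id (gofp s)).det
            * (B.submatrix id (fun c => if gofp s c = i then j else gofp s c)).det) := by
          rw [sumperm B (fun c => if gofp s c = i then j else gofp s c)]
          ring
  · rw [if_neg hi, mul_zero, mul_zero]
    refine Finset.sum_eq_zero fun σ _ => ?_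
    have hG0 : G (gofp s ∘ σ) = 0 := by
      simp only [hGdef]
      refine Finset.sum_eq_zero fun b₀ _ => ?_
      rw [if_neg]
      intro h
      have h' : gofp s (σ b₀) = i := by simpa using h
      exact hi (h' ▸ Finset.orderEmbOfFin_mem s.1 s.2 (σ b₀))
    rw [hG0, zero_mul]

/-- Linearity of the determinant in one row. -/
theorem rowlin {m : ℕ} (L : Matrix (Fin m) (Fin m) ℝ) (b₀ : Fin m) (v : Fin m → ℝ) :
    (L.updateRow b₀ v).det = ∑ a, v a * (L.updateRow b₀ (Pi.single a 1)).det := by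
  have hv : v = ∑ a : Fin m, v a • (Pi.single a 1 : Fin m → ℝ) := by
    funext k
    simp [Pi.single_apply]
  have h0 : ∀ u : Fin m → ℝ, (L.updateRow b₀ u).det
      = Matrix.detRowAlternating.toMultilinearMap (Function.update L b₀ u) := fun u => rfl
  calc (L.updateRow b₀ v).det
      = Matrix.detRowAlternating.toMultilinearMap
          (Function.update L b₀ (∑ a : Fin m, v a • (Pi.single a 1 : Fin m → ℝ))) := by
        rw [h0, ← hv]
    _ = ∑ a, v a * (L.updateRow b₀ (Pi.single a 1)).det := by
        erw [MultilinearMap.map_update_sum]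
        refine Finset.sum_congr rfl fun a _ => ?_
        erw [MultilinearMap.map_update_smul, smul_eq_mul, ← h0]

theorem int_abs_le_sq (z : ℤ) : |(z:ℝ)| ≤ (z:ℝ)^2 := by
  rcases eq_or_ne z 0 with h | h
  · simp [h]
  · have h1 : (1:ℝ) ≤ |(z:ℝ)| := by exact_mod_cast Int.one_le_abs (by omega)
    calc |(z:ℝ)| = 1 * |(z:ℝ)| := by ring
      _ ≤ |(z:ℝ)| * |(z:ℝ)| := by nlinarith
      _ = (z:ℝ)^2 := by rw [← abs_mul, ← sq, abs_sq]

theorem q_bound_of_feasible {m n : ℕ} (A : Matrix (Fin m) (Fin n) ℤ)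
    (hrank : (rmat A).rank = m)
    (𝒟 : ℝ) (hD : IsGreatest (subdets A) 𝒟)
    (b : Fin m → ℤ) (c : Fin n → ℤ) (hc : ∀ i, 0 < c i)
    (y : Fin n → ℝ) (hyb : rmat A *ᵥ y = fun j => (b j : ℝ)) (hy : ∀ i, 0 ≤ y i)
    (x : Fin n → ℝ) (hx : ∀ i, 0 < x i) :
    ∀ i, |physQ (rmat A) (fun j => (b j : ℝ)) (fun i => (c i : ℝ)) x i| ≤ 𝒟 * ∑ i, |y i| := by
  classical
  intro i
  set B : Matrix (Fin m) (Fin n) ℝ := rmat A with hB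
  set w : Fin n → ℝ := fun k => x k / (c k : ℝ) with hwdef
  have hw : ∀ k, 0 < w k := fun k => div_pos (hx k) (by exact_mod_cast hc k)
  have hphysW : physW (fun i => (c i : ℝ)) x = Matrix.diagonal w := rfl
  set L : Matrix (Fin m) (Fin m) ℝ := B * Matrix.diagonal w * Bᵀ with hL
  -- facts about 𝒟
  have hD1 : (1:ℝ) ≤ 𝒟 := by
    refine hD.2 ⟨0, Fin.elim0, Fin.elim0, fun a => a.elim0, fun a => a.elim0, ?_⟩
    simp [Matrix.det_isEmpty]
  have hD0 : (0:ℝ) ≤ 𝒟 := le_trans zero_le_one hD1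
  have hcast : ∀ h : Fin m → Fin n, (B.submatrix id h).det = ((A.submatrix id h).det : ℝ) := by
    intro h
    rw [show B.submatrix id h = (A.submatrix id h).map (Int.cast : ℤ → ℝ) from rfl]
    have h2 : (A.submatrix id h).map (Int.cast : ℤ → ℝ)
        = (Int.castRingHom ℝ).mapMatrix (A.submatrix id h) := by
      ext a b'
      simp
    rw [h2, ← RingHom.map_det]
    simp
  have hsub : ∀ h : Fin m → Fin n, |(B.submatrix id h).det| ≤ 𝒟 := by
    intro h
    by_cases hinj : Function.Injective h
    · exact hD.2 ⟨m, id, h, Function.injective_id, hinj, by rw [hcast]⟩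
    · rw [Function.not_injective_iff] at hinj
      obtain ⟨a, b', hab, hne'⟩ := hinj
      rw [Matrix.det_zero_of_column_eq hne'
        (fun k => by simp [Matrix.submatrix_apply, hab])]
      simpa using hD0
  have hsq : ∀ h : Fin m → Fin n, |(B.submatrix id h).det| ≤ ((B.submatrix id h).det)^2 := by
    intro h
    rw [hcast]
    exact int_abs_le_sq _
  -- the determinant of L is nonnegative
  have hdetL_nonneg : 0 ≤ L.det := by
    rw [hL, detL_eq]
    exact Finset.sum_nonneg fun s _ =>
      mul_nonneg (Finset.prod_nonneg fun a _ => (hw _).le) (sq_nonneg _)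
  -- the key bound
  have key : ∀ j' : Fin n,
      |w i * ∑ b₀, B b₀ j' * (L.updateRow b₀ (fun k => B k i)).det| ≤ 𝒟 * L.det := by
    intro j'
    rw [hL, mixed_eq B w i j', detL_eq, Finset.mul_sum]
    refine le_trans (Finset.abs_sum_le_sum_abs _ _) (Finset.sum_le_sum fun s _ => ?_)
    have hPw : 0 ≤ ∏ a, w (gofp s a) := Finset.prod_nonneg fun a _ => (hw _).le
    have ht : |(if i ∈ s.1 then
        (B.submatrix id (fun c => if gofp s c = i then j' else gofp s c)).det else 0)| ≤ 𝒟 := by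
      split
      · exact hsub _
      · simpa using hD0
    calc |(∏ a, w (gofp s a)) * ((B.submatrix id (gofp s)).det
            * (if i ∈ s.1 then
                (B.submatrix id (fun c => if gofp s c = i then j' else gofp s c)).det else 0))|
        = (∏ a, w (gofp s a)) * (|(B.submatrix id (gofp s)).det|
            * |(if i ∈ s.1 then
                (B.submatrix id (fun c => if gofp s c = i then j' else gofp s c)).det else 0)|) := by
          rw [abs_mul, abs_mul, abs_of_nonneg hPw]
      _ ≤ (∏ a, w (gofp s a)) * (((B.submatrix id (gofp s)).det)^2 * 𝒟) := by
          refine mul_le_mul_of_nonneg_left ?_ hPw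
          exact mul_le_mul (hsq _) ht (abs_nonneg _) (sq_nonneg _)
      _ = 𝒟 * ((∏ a, w (gofp s a)) * ((B.submatrix id (gofp s)).det)^2) := by ring
  -- reduce physQ to the mixed sums
  by_cases hdet : L.det = 0
  · have hinv : L⁻¹ = 0 := by
      rw [Matrix.inv_def, Ring.inverse_eq_inv, hdet, _root_.inv_zero, zero_smul]
    have hq0 : physQ B (fun j => (b j : ℝ)) (fun i => (c i : ℝ)) x i = 0 := by
      rw [physQ, hphysW, ← hL, hinv]
      simp [Matrix.zero_mulVec, Matrix.mulVec_zero]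
    rw [hq0]
    simpa using mul_nonneg hD0 (Finset.sum_nonneg fun k _ => abs_nonneg (y k))
  · have hdetpos : 0 < L.det := lt_of_le_of_ne hdetL_nonneg (Ne.symm hdet)
    have hadj : ∀ j' : Fin n, (Bᵀ * L.adjugate * B) i j'
        = ∑ b₀, B b₀ j' * (L.updateRow b₀ (fun k => B k i)).det := by
      intro j'
      rw [Matrix.mul_apply]
      refine Finset.sum_congr rfl fun b₀ _ => ?_
      have e1 : (Bᵀ * L.adjugate) i b₀ = (L.updateRow b₀ (fun k => B k i)).det := by
        rw [Matrix.mul_apply, rowlin L b₀ (fun k => B k i)]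
        exact Finset.sum_congr rfl fun a _ => by
          rw [Matrix.transpose_apply, Matrix.adjugate_apply]
      rw [e1, mul_comm]
    have hq : physQ B (fun j => (b j : ℝ)) (fun i => (c i : ℝ)) x i
        = (L.det)⁻¹ * ∑ j', (w i * ∑ b₀, B b₀ j'
            * (L.updateRow b₀ (fun k => B k i)).det) * y j' := by
      rw [physQ, hphysW, ← hL, ← hyb]
      rw [Matrix.mulVec_mulVec, Matrix.mulVec_mulVec, Matrix.mulVec_mulVec]
      have hM : Matrix.diagonal w * Bᵀ * L⁻¹ * B
          = (L.det)⁻¹ • (Matrix.diagonal w * (Bᵀ * L.adjugate * B)) := by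
        rw [Matrix.inv_def, Ring.inverse_eq_inv, Matrix.mul_smul, Matrix.smul_mul]
        congr 1
        rw [← Matrix.mul_assoc, ← Matrix.mul_assoc]
      rw [hM, Matrix.smul_mulVec, Pi.smul_apply, smul_eq_mul]
      congr 1
      have hmv : ((Matrix.diagonal w * (Bᵀ * L.adjugate * B)) *ᵥ y) i
          = ∑ j', (Matrix.diagonal w * (Bᵀ * L.adjugate * B)) i j' * y j' := by
        simp [Matrix.mulVec, dotProduct]
      rw [hmv]
      refine Finset.sum_congr rfl fun j' _ => ?_
      rw [Matrix.diagonal_mul, hadj j']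
    rw [hq]
    have habs : |(L.det)⁻¹| = (L.det)⁻¹ := abs_of_pos (inv_pos.mpr hdetpos)
    calc |(L.det)⁻¹ * ∑ j', (w i * ∑ b₀, B b₀ j'
            * (L.updateRow b₀ (fun k => B k i)).det) * y j'|
        ≤ (L.det)⁻¹ * ∑ j', (𝒟 * L.det) * |y j'| := by
          rw [abs_mul, habs]
          refine mul_le_mul_of_nonneg_left ?_ (inv_pos.mpr hdetpos).le
          refine le_trans (Finset.abs_sum_le_sum_abs _ _) (Finset.sum_le_sum fun j' _ => ?_)
          rw [abs_mul]
          exact mul_le_mul_of_nonneg_right (key j') (abs_nonneg _)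
      _ = 𝒟 * ∑ j', |y j'| := by
          rw [← Finset.mul_sum]
          field_simp
end

section
/- Suppose x : [0,T) → ℝⁿ_{>0} is a solution of the Physarum dynamics ẋ = q − x. Then for every i ∈ {1,…,n} and every t ∈ [0,T), xᵢ(t) ≤ max(xᵢ(0), β), where β = 𝒟² · n · ‖b‖₁. -/
open Matrix Filter Set Topology

namespace PhysAux

variable {m n : ℕ}

noncomputable def Cm (B : Matrix (Fin m) (Fin n) ℝ) (s : Fin m → Fin n) :
    Matrix (Fin m) (Fin m) ℝ := Matrix.of fun j k => B k (s j)

noncomputable def Hnum (B : Matrix (Fin m) (Fin n) ℝ) (b : Fin m → ℝ)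
    (s : Fin m → Fin n) (i : Fin n) : ℝ :=
  ∑ j ∈ Finset.univ.filter (fun j => s j = i), ((Cm B s).updateRow j b).det


lemma BWBt_eq (B : Matrix (Fin m) (Fin n) ℝ) (w : Fin n → ℝ) :
    (B * Matrix.diagonal w * Bᵀ) =
      Matrix.of fun j => ∑ e : Fin n, (w e * B j e) • (fun k => B k e) := by
  ext j k
  rw [Matrix.mul_apply]
  simp only [Matrix.mul_diagonal, Matrix.transpose_apply, Matrix.of_apply,
    Finset.sum_apply, Pi.smul_apply, smul_eq_mul]
  exact Finset.sum_congr rfl fun e _ => by ring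

lemma det_BWBt (B : Matrix (Fin m) (Fin n) ℝ) (w : Fin n → ℝ) :
    (B * Matrix.diagonal w * Bᵀ).det =
      ∑ s : Fin m → Fin n, (∏ k, (w (s k) * B k (s k))) * (Cm B s).det := by
  rw [BWBt_eq]
  have h0 : (Matrix.of fun j => ∑ e : Fin n, (w e * B j e) • (fun k => B k e)).det
      = (Matrix.detRowAlternating (R := ℝ) (n := Fin m)).toMultilinearMap
        (fun j => ∑ e : Fin n, (w e * B j e) • (fun k => B k e)) := rfl
  rw [h0, MultilinearMap.map_sum]
  refine Finset.sum_congr rfl fun s _ => ?_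
  have h1 : (Matrix.detRowAlternating (R := ℝ) (n := Fin m)).toMultilinearMap
      (fun j => (w (s j) * B j (s j)) • (fun k => B k (s j)))
      = (∏ k, (w (s k) * B k (s k))) • (Matrix.detRowAlternating (R := ℝ) (n := Fin m)).toMultilinearMap
        (fun j k => B k (s j)) := by
    exact MultilinearMap.map_smul_univ _ (fun j => w (s j) * B j (s j)) (fun j k => B k (s j))
  exact h1



lemma det_updateRow_BWBt (B : Matrix (Fin m) (Fin n) ℝ) (w : Fin n → ℝ) (b : Fin m → ℝ)
    (i : Fin n) (j : Fin m) :
    ((B * Matrix.diagonal w * Bᵀ).updateRow j b).det =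
      ∑ s : Fin m → Fin n,
        (∏ k, (if k = j then (if s j = i then (1:ℝ) else 0) else (w (s k) * B k (s k))))
          * ((Cm B s).updateRow j b).det := by
  have hrow : (B * Matrix.diagonal w * Bᵀ).updateRow j b
      = Matrix.of fun k => ∑ e : Fin n,
          (if k = j then ((if e = i then (1:ℝ) else 0) • b)
            else ((w e * B k e) • fun k' => B k' e)) := by
    ext k l
    by_cases hk : k = j
    · subst hk
      simp [Finset.sum_apply, ite_mul]
    · simp only [Matrix.updateRow_ne hk, Matrix.of_apply, Finset.sum_apply, if_neg hk,
        Pi.smul_apply, smul_eq_mul]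
      rw [Matrix.mul_apply]
      simp only [Matrix.mul_diagonal, Matrix.transpose_apply]
      exact Finset.sum_congr rfl fun e _ => by ring
  rw [hrow]
  have h0 : (Matrix.of fun k => ∑ e : Fin n,
          (if k = j then ((if e = i then (1:ℝ) else 0) • b)
            else ((w e * B k e) • fun k' => B k' e))).det
      = (Matrix.detRowAlternating (R := ℝ) (n := Fin m)).toMultilinearMap
        (fun k => ∑ e : Fin n,
          (if k = j then ((if e = i then (1:ℝ) else 0) • b)
            else ((w e * B k e) • fun k' => B k' e))) := rfl
  rw [h0, MultilinearMap.map_sum]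
  refine Finset.sum_congr rfl fun s _ => ?_
  have hterm : (fun k => (if k = j then ((if s k = i then (1:ℝ) else 0) • b)
        else ((w (s k) * B k (s k)) • fun k' => B k' (s k))))
      = fun k => (if k = j then (if s j = i then (1:ℝ) else 0) else (w (s k) * B k (s k)))
          • ((Cm B s).updateRow j b) k := by
    funext k
    by_cases hk : k = j
    · subst hk; simp [Matrix.updateRow_self]
    · simp [hk, Matrix.updateRow_ne hk, Cm]
      rfl
  have h1 := MultilinearMap.map_smul_univ
    (Matrix.detRowAlternating (R := ℝ) (n := Fin m)).toMultilinearMap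
    (fun k => (if k = j then (if s j = i then (1:ℝ) else 0) else (w (s k) * B k (s k))))
    (fun k => ((Cm B s).updateRow j b) k)
  calc (Matrix.detRowAlternating (R := ℝ) (n := Fin m)).toMultilinearMap
        (fun k => (if k = j then ((if s k = i then (1:ℝ) else 0) • b)
          else ((w (s k) * B k (s k)) • fun k' => B k' (s k))))
      = (Matrix.detRowAlternating (R := ℝ) (n := Fin m)).toMultilinearMap
        (fun k => (if k = j then (if s j = i then (1:ℝ) else 0) else (w (s k) * B k (s k)))
          • ((Cm B s).updateRow j b) k) := by rw [hterm]
    _ = _ := by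
        rw [h1]; simp [smul_eq_mul]; exact Or.inl rfl

lemma num_expand (B : Matrix (Fin m) (Fin n) ℝ) (w : Fin n → ℝ) (b : Fin m → ℝ) (i : Fin n) :
    ∑ j, B j i * (w i * ((B * Matrix.diagonal w * Bᵀ).updateRow j b).det)
      = ∑ s : Fin m → Fin n, ((∏ k, w (s k)) * (∏ k, B k (s k))) * Hnum B b s i := by
  simp_rw [det_updateRow_BWBt B w b i, Finset.mul_sum]
  rw [Finset.sum_comm]
  refine Finset.sum_congr rfl fun s _ => ?_
  rw [Hnum, Finset.mul_sum, Finset.sum_filter]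
  refine Finset.sum_congr rfl fun j _ => ?_
  have hsplit : (∏ k, (if k = j then (if s j = i then (1:ℝ) else 0) else (w (s k) * B k (s k))))
      = (if s j = i then (1:ℝ) else 0) *
          ∏ k ∈ Finset.univ.erase j, (w (s k) * B k (s k)) := by
    rw [← Finset.mul_prod_erase Finset.univ _ (Finset.mem_univ j), if_pos rfl]
    congr 1
    exact Finset.prod_congr rfl fun k hk => if_neg (Finset.ne_of_mem_erase hk)
  rw [hsplit]
  by_cases hji : s j = i
  · rw [if_pos hji, if_pos hji, one_mul]
    have h2 : w i * (∏ k ∈ Finset.univ.erase j, (w (s k) * B k (s k)))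
        * B j i = ∏ k, (w (s k) * B k (s k)) := by
      rw [← hji, ← Finset.mul_prod_erase Finset.univ
        (fun k => w (s k) * B k (s k)) (Finset.mem_univ j)]
      ring
    rw [← Finset.prod_mul_distrib] at *
    calc B j i * (w i * ((∏ k ∈ Finset.univ.erase j, (w (s k) * B k (s k)))
            * ((Cm B s).updateRow j b).det))
        = (w i * (∏ k ∈ Finset.univ.erase j, (w (s k) * B k (s k))) * B j i)
            * ((Cm B s).updateRow j b).det := by ring
      _ = _ := by rw [h2]
  · rw [if_neg hji, if_neg hji]
    ring



lemma not_inj {s : Fin m → Fin n} (hs : ¬ Function.Injective s) :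
    ∃ k k', s k = s k' ∧ k ≠ k' := by
  simp only [Function.Injective, not_forall] at hs
  obtain ⟨k, k', h1, h2⟩ := hs
  exact ⟨k, k', h1, h2⟩

lemma det_Cm_zero (B : Matrix (Fin m) (Fin n) ℝ) {s : Fin m → Fin n}
    (hs : ¬ Function.Injective s) : (Cm B s).det = 0 := by
  obtain ⟨k, k', hss, hne⟩ := not_inj hs
  exact Matrix.det_zero_of_row_eq hne (funext fun l => by simp [Cm, hss])

lemma Hnum_zero (B : Matrix (Fin m) (Fin n) ℝ) (b : Fin m → ℝ) {s : Fin m → Fin n}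
    (hs : ¬ Function.Injective s) (i : Fin n) : Hnum B b s i = 0 := by
  obtain ⟨k, k', hss, hne⟩ := not_inj hs
  rw [Hnum]
  by_cases hki : s k = i
  · have hk'i : s k' = i := hss ▸ hki
    have hsub : ({k, k'} : Finset (Fin m)) ⊆ Finset.univ.filter (fun j => s j = i) := by
      intro j hj
      simp only [Finset.mem_insert, Finset.mem_singleton] at hj
      rcases hj with rfl | rfl <;> simp [hki, hk'i]
    rw [← Finset.sum_subset hsub (fun j _ hj' => ?_)]
    · rw [Finset.sum_pair hne]
      have hswap : (Cm B s).updateRow k' b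
          = ((Cm B s).updateRow k b).submatrix (Equiv.swap k k') id := by
        ext j l
        rcases eq_or_ne j k' with rfl | hjk'
        · simp [Matrix.updateRow_ne hne, Equiv.swap_apply_right, Matrix.updateRow_self]
        · rcases eq_or_ne j k with rfl | hjk
          · simp [Matrix.updateRow_self, Equiv.swap_apply_left,
              Matrix.updateRow_ne hjk', Matrix.updateRow_ne (Ne.symm hjk'), Cm, hss]
          · simp [Matrix.updateRow_ne hjk', Matrix.updateRow_ne hjk,
              Equiv.swap_apply_of_ne_of_ne hjk hjk']
      rw [hswap, Matrix.det_permute, Equiv.Perm.sign_swap hne]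
      push_cast
      ring
    · -- j in filter, j ∉ {k, k'}: det has equal rows k k'
      simp only [Finset.mem_insert, Finset.mem_singleton, not_or] at hj'
      refine Matrix.det_zero_of_row_eq hne (funext fun l => ?_)
      rw [Matrix.updateRow_ne (fun h => hj'.1 h.symm),
        Matrix.updateRow_ne (fun h => hj'.2 h.symm)]
      simp [Cm, hss]
  · refine Finset.sum_eq_zero fun j hj => ?_
    have hji : s j = i := (Finset.mem_filter.mp hj).2
    have hjk : k ≠ j := fun h => hki (h ▸ hji)
    have hjk' : k' ≠ j := fun h => hki (hss ▸ h ▸ hji)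
    refine Matrix.det_zero_of_row_eq hne (funext fun l => ?_)
    rw [Matrix.updateRow_ne hjk, Matrix.updateRow_ne hjk']
    simp [Cm, hss]

lemma det_Cm_comp (B : Matrix (Fin m) (Fin n) ℝ) (s : Fin m → Fin n) (σ : Equiv.Perm (Fin m)) :
    (Cm B (s ∘ σ)).det = ((Equiv.Perm.sign σ : ℤ) : ℝ) * (Cm B s).det := by
  have h : Cm B (s ∘ σ) = (Cm B s).submatrix σ id := rfl
  rw [h, Matrix.det_permute]

lemma Hnum_comp (B : Matrix (Fin m) (Fin n) ℝ) (b : Fin m → ℝ) (s : Fin m → Fin n)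
    (i : Fin n) (σ : Equiv.Perm (Fin m)) :
    Hnum B b (s ∘ σ) i = ((Equiv.Perm.sign σ : ℤ) : ℝ) * Hnum B b s i := by
  rw [Hnum, Hnum, Finset.mul_sum]
  refine Finset.sum_equiv σ (fun j => ?_) (fun j hj => ?_)
  · simp [Function.comp]
  · have hupd : (Cm B (s ∘ σ)).updateRow j b
        = ((Cm B s).updateRow (σ j) b).submatrix σ id := by
      ext j' l
      rcases eq_or_ne j' j with rfl | hj'
      · simp [Matrix.updateRow_self]
      · have : σ j' ≠ σ j := fun h => hj' (σ.injective h)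
        simp [Matrix.updateRow_ne hj', Matrix.updateRow_ne this, Cm]
    rw [hupd, Matrix.det_permute]

lemma det_Cm_leibniz (B : Matrix (Fin m) (Fin n) ℝ) (s : Fin m → Fin n) :
    (Cm B s).det = ∑ σ : Equiv.Perm (Fin m),
      ((Equiv.Perm.sign σ : ℤ) : ℝ) * ∏ k, B k (s (σ k)) := by
  rw [Matrix.det_apply']
  rfl

lemma perm_sum (B : Matrix (Fin m) (Fin n) ℝ) (w : Fin n → ℝ) (s : Fin m → Fin n)
    (G : (Fin m → Fin n) → ℝ)
    (hG : ∀ σ : Equiv.Perm (Fin m), G (s ∘ σ) = ((Equiv.Perm.sign σ : ℤ) : ℝ) * G s) :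
    ∑ σ : Equiv.Perm (Fin m), (∏ k, (w (s (σ k)) * B k (s (σ k)))) * G (s ∘ σ)
      = (∏ k, w (s k)) * ((Cm B s).det * G s) := by
  have h1 : ∀ σ : Equiv.Perm (Fin m),
      (∏ k, (w (s (σ k)) * B k (s (σ k)))) * G (s ∘ σ)
        = (∏ k, w (s k)) * ((((Equiv.Perm.sign σ : ℤ) : ℝ) * ∏ k, B k (s (σ k))) * G s) := by
    intro σ
    rw [Finset.prod_mul_distrib, hG σ, Equiv.prod_comp σ (fun k => w (s k))]
    ring
  rw [Finset.sum_congr rfl (fun σ _ => h1 σ), ← Finset.mul_sum, ← Finset.sum_mul,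
    ← det_Cm_leibniz]



open scoped Classical in
noncomputable def Msort (m n : ℕ) : Finset (Fin m → Fin n) :=
  Finset.univ.filter (fun s => StrictMono s)

lemma mem_Msort {s : Fin m → Fin n} : s ∈ Msort m n ↔ StrictMono s := by
  classical
  simp [Msort]

lemma image_comp_perm (s : Fin m → Fin n) (σ : Equiv.Perm (Fin m)) :
    Finset.univ.image (s ∘ σ) = Finset.univ.image s := by
  ext x
  simp only [Finset.mem_image, Finset.mem_univ, true_and, Function.comp_apply]
  constructor
  · rintro ⟨k, rfl⟩; exact ⟨σ k, rfl⟩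
  · rintro ⟨k, rfl⟩; exact ⟨σ.symm k, by simp⟩

lemma strictMono_unique {s₁ s₂ : Fin m → Fin n} (h₁ : StrictMono s₁) (h₂ : StrictMono s₂)
    (himg : Finset.univ.image s₁ = Finset.univ.image s₂) : s₁ = s₂ := by
  have hc2 : (Finset.univ.image s₂).card = m := by
    rw [Finset.card_image_of_injective _ h₂.injective, Finset.card_univ, Fintype.card_fin]
  have e1 : s₁ = ⇑((Finset.univ.image s₂).orderEmbOfFin hc2) :=
    Finset.orderEmbOfFin_unique hc2
      (fun x => himg ▸ Finset.mem_image_of_mem _ (Finset.mem_univ x)) h₁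
  have e2 : s₂ = ⇑((Finset.univ.image s₂).orderEmbOfFin hc2) :=
    Finset.orderEmbOfFin_unique hc2
      (fun x => Finset.mem_image_of_mem _ (Finset.mem_univ x)) h₂
  exact e1.trans e2.symm

lemma sum_group (F : (Fin m → Fin n) → ℝ) (hF : ∀ s, ¬ Function.Injective s → F s = 0) :
    ∑ s : Fin m → Fin n, F s
      = ∑ s ∈ Msort m n, ∑ σ : Equiv.Perm (Fin m), F (s ∘ σ) := by
  classical
  have h1 : ∑ s : Fin m → Fin n, F s
      = ∑ s ∈ Finset.univ.filter (fun s : Fin m → Fin n => Function.Injective s), F s :=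
    (Finset.sum_filter_of_ne (fun s _ hFs => by
      by_contra h; exact hFs (hF s h))).symm
  rw [h1, ← Finset.sum_product']
  refine (Finset.sum_bij (fun (p : (Fin m → Fin n) × Equiv.Perm (Fin m)) _ => p.1 ∘ p.2)
    ?_ ?_ ?_ ?_).symm
  · rintro ⟨s, σ⟩ hp
    simp only [Finset.mem_product, mem_Msort] at hp
    simp only [Finset.mem_filter, Finset.mem_univ, true_and]
    exact hp.1.injective.comp σ.injective
  · rintro ⟨s₁, σ₁⟩ hp₁ ⟨s₂, σ₂⟩ hp₂ heq
    simp only [Finset.mem_product, mem_Msort] at hp₁ hp₂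
    have heq' : s₁ ∘ ⇑σ₁ = s₂ ∘ ⇑σ₂ := heq
    have himg : Finset.univ.image s₁ = Finset.univ.image s₂ := by
      rw [← image_comp_perm s₁ σ₁, ← image_comp_perm s₂ σ₂, heq']
    have hs : s₁ = s₂ := strictMono_unique hp₁.1 hp₂.1 himg
    subst hs
    have hσ : σ₁ = σ₂ := by
      ext k
      exact congrArg Fin.val (hp₁.1.injective (congrFun heq' k))
    rw [hσ]
  · -- surjectivity
    intro t ht
    simp only [Finset.mem_filter, Finset.mem_univ, true_and] at ht
    set S := Finset.univ.image t with hS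
    have hcard : S.card = m := by
      rw [hS, Finset.card_image_of_injective _ ht, Finset.card_univ, Fintype.card_fin]
    set u : Fin m → Fin n := ⇑(S.orderEmbOfFin hcard) with hu
    have humono : StrictMono u := (S.orderEmbOfFin hcard).strictMono
    have htS : ∀ k, t k ∈ S := fun k => Finset.mem_image_of_mem _ (Finset.mem_univ k)
    have huS : ∀ k, u k ∈ S := fun k => Finset.orderEmbOfFin_mem S hcard k
    have hcardS : Fintype.card {a // a ∈ S} = m := by rw [Fintype.card_coe, hcard]
    have hbt : Function.Bijective (fun k => (⟨t k, htS k⟩ : {a // a ∈ S})) :=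
      (Fintype.bijective_iff_injective_and_card _).mpr
        ⟨fun a b hab => ht (congrArg Subtype.val hab), by rw [hcardS, Fintype.card_fin]⟩
    have hbu : Function.Bijective (fun k => (⟨u k, huS k⟩ : {a // a ∈ S})) :=
      (Fintype.bijective_iff_injective_and_card _).mpr
        ⟨fun a b hab => humono.injective (congrArg Subtype.val hab),
          by rw [hcardS, Fintype.card_fin]⟩
    refine ⟨⟨u, (Equiv.ofBijective _ hbt).trans (Equiv.ofBijective _ hbu).symm⟩, ?_, ?_⟩
    · simp only [Finset.mem_product, mem_Msort, Finset.mem_univ, and_true]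
      exact humono
    · funext k
      exact congrArg Subtype.val ((Equiv.ofBijective _ hbu).apply_symm_apply ⟨t k, htS k⟩)
  · intro p _
    rfl



lemma one_le_D (A : Matrix (Fin m) (Fin n) ℤ) (𝒟 : ℝ) (hD : IsGreatest (subdets A) 𝒟) :
    1 ≤ 𝒟 := by
  refine hD.2 ⟨0, Fin.elim0, Fin.elim0, fun a => a.elim0, fun a => a.elim0, ?_⟩
  rw [Matrix.det_fin_zero]
  norm_num

lemma det_Cm_int (A : Matrix (Fin m) (Fin n) ℤ) (s : Fin m → Fin n) :
    (Cm (rmat A) s).det = (((Aᵀ.submatrix s id).det : ℤ) : ℝ) := by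
  have h : Cm (rmat A) s = (Aᵀ.submatrix s id).map (Int.cast : ℤ → ℝ) := by
    ext j k; rfl
  rw [h]
  exact (RingHom.map_det (Int.castRingHom ℝ) (Aᵀ.submatrix s id)).symm

lemma abs_det_le_sq (A : Matrix (Fin m) (Fin n) ℤ) (s : Fin m → Fin n) :
    |(Cm (rmat A) s).det| ≤ (Cm (rmat A) s).det ^ 2 := by
  rw [det_Cm_int]
  set z := (Aᵀ.submatrix s id).det with hz
  rcases eq_or_ne z 0 with h | h
  · simp [h]
  · have h1 : (1 : ℤ) ≤ |z| := Int.one_le_abs (by exact_mod_cast h)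
    have h2 : (1 : ℝ) ≤ |(z : ℝ)| := by
      rw [← Int.cast_abs]; exact_mod_cast h1
    nlinarith [sq_abs ((z:ℝ)), abs_nonneg ((z:ℝ))]

lemma det_updateRow_le {m' : ℕ} (A : Matrix (Fin (m'+1)) (Fin n) ℤ) (𝒟 : ℝ)
    (hD : IsGreatest (subdets A) 𝒟) (b : Fin (m'+1) → ℝ) (s : Fin (m'+1) → Fin n)
    (hs : Function.Injective s) (j : Fin (m'+1)) :
    |((Cm (rmat A) s).updateRow j b).det| ≤ 𝒟 * ∑ j', |b j'| := by
  rw [Matrix.det_succ_row _ j]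
  refine (Finset.abs_sum_le_sum_abs _ _).trans ?_
  rw [Finset.mul_sum]
  refine Finset.sum_le_sum fun j' _ => ?_
  have hb : ((Cm (rmat A) s).updateRow j b) j j' = b j' := by
    rw [Matrix.updateRow_self]
  have hminor : (((Cm (rmat A) s).updateRow j b).submatrix j.succAbove j'.succAbove).det
      = (((A.submatrix j'.succAbove (s ∘ j.succAbove))ᵀ.map (Int.cast : ℤ → ℝ)).det) := by
    congr 1
    ext a c
    rw [Matrix.submatrix_apply, Matrix.updateRow_ne (Fin.succAbove_ne j a)]
    rfl
  have hcast : ((A.submatrix j'.succAbove (s ∘ j.succAbove))ᵀ.map (Int.cast : ℤ → ℝ)).det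
      = (((A.submatrix j'.succAbove (s ∘ j.succAbove))ᵀ.det : ℤ) : ℝ) :=
    (RingHom.map_det (Int.castRingHom ℝ) _).symm
  have habs : |(((Cm (rmat A) s).updateRow j b).submatrix j.succAbove j'.succAbove).det| ≤ 𝒟 := by
    rw [hminor, hcast, Matrix.det_transpose]
    exact hD.2 ⟨m', j'.succAbove, s ∘ j.succAbove, Fin.succAbove_right_injective,
      hs.comp Fin.succAbove_right_injective, rfl⟩
  calc |(-1:ℝ)^(j+j' : ℕ) * ((Cm (rmat A) s).updateRow j b) j j'
        * (((Cm (rmat A) s).updateRow j b).submatrix j.succAbove j'.succAbove).det|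
      = |b j'| * |(((Cm (rmat A) s).updateRow j b).submatrix j.succAbove j'.succAbove).det| := by
        rw [hb, abs_mul, abs_mul, abs_pow, abs_neg, abs_one, one_pow, one_mul]
    _ ≤ |b j'| * 𝒟 := mul_le_mul_of_nonneg_left habs (abs_nonneg _)
    _ = 𝒟 * |b j'| := mul_comm _ _


lemma Hnum_le (A : Matrix (Fin m) (Fin n) ℤ) (𝒟 : ℝ) (hD : IsGreatest (subdets A) 𝒟)
    (b : Fin m → ℝ) {s : Fin m → Fin n} (hs : Function.Injective s) (i : Fin n) :
    |Hnum (rmat A) b s i| ≤ 𝒟 * ∑ j', |b j'| := by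
  have hDb : 0 ≤ 𝒟 * ∑ j', |b j'| :=
    mul_nonneg (le_trans zero_le_one (one_le_D A 𝒟 hD))
      (Finset.sum_nonneg fun _ _ => abs_nonneg _)
  rw [Hnum]
  refine (Finset.abs_sum_le_sum_abs _ _).trans ?_
  have hcard : (Finset.univ.filter (fun j => s j = i)).card ≤ 1 :=
    Finset.card_le_one.mpr fun a ha b' hb' =>
      hs ((Finset.mem_filter.mp ha).2.trans (Finset.mem_filter.mp hb').2.symm)
  have hterm : ∀ j ∈ Finset.univ.filter (fun j => s j = i),
      |((Cm (rmat A) s).updateRow j b).det| ≤ 𝒟 * ∑ j', |b j'| := by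
    intro j _
    obtain ⟨m', rfl⟩ : ∃ m', m = m' + 1 := ⟨m - 1, (Nat.succ_pred_eq_of_pos j.pos).symm⟩
    exact det_updateRow_le A 𝒟 hD b s hs j
  calc ∑ j ∈ Finset.univ.filter (fun j => s j = i), |((Cm (rmat A) s).updateRow j b).det|
      ≤ ∑ _j ∈ Finset.univ.filter (fun j => s j = i), (𝒟 * ∑ j', |b j'|) :=
        Finset.sum_le_sum hterm
    _ = ((Finset.univ.filter (fun j => s j = i)).card : ℝ) * (𝒟 * ∑ j', |b j'|) := by
        rw [Finset.sum_const, nsmul_eq_mul]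
    _ ≤ 𝒟 * ∑ j', |b j'| := by
        refine mul_le_of_le_one_left hDb ?_
        exact_mod_cast hcard

lemma mulVec_inv_bound (A : Matrix (Fin m) (Fin n) ℤ) (𝒟 : ℝ)
    (hD : IsGreatest (subdets A) 𝒟) (b : Fin m → ℝ) (w : Fin n → ℝ)
    (hw : ∀ e, 0 ≤ w e) (i : Fin n) :
    (Matrix.diagonal w *ᵥ ((rmat A)ᵀ *ᵥ ((rmat A * Matrix.diagonal w * (rmat A)ᵀ)⁻¹ *ᵥ b))) i
      ≤ 𝒟 * ∑ j, |b j| := by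
  classical
  have hDb : 0 ≤ 𝒟 * ∑ j, |b j| :=
    mul_nonneg (le_trans zero_le_one (one_le_D A 𝒟 hD))
      (Finset.sum_nonneg fun _ _ => abs_nonneg _)
  set B := rmat A with hB
  set L := B * Matrix.diagonal w * Bᵀ with hL
  by_cases hdet : IsUnit L.det
  · have hne : L.det ≠ 0 := IsUnit.ne_zero hdet
    have hsym : Lᵀ = L := by
      rw [hL, Matrix.transpose_mul, Matrix.transpose_mul, Matrix.transpose_transpose,
        Matrix.diagonal_transpose, Matrix.mul_assoc]
    have hcol : ∀ j, (L.updateCol j b).det = (L.updateRow j b).det := by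
      intro j
      rw [← Matrix.det_transpose (L.updateCol j b), ← Matrix.updateRow_transpose, hsym]
    have hq : (Matrix.diagonal w *ᵥ (Bᵀ *ᵥ (L⁻¹ *ᵥ b))) i
        = (∑ j, B j i * (w i * (L.updateRow j b).det)) / L.det := by
      have hinv : L⁻¹ *ᵥ b = (L.det)⁻¹ • Matrix.cramer L b := by
        rw [Matrix.inv_def, Matrix.smul_mulVec, ← Matrix.cramer_eq_adjugate_mulVec,
          Ring.inverse_eq_inv]
      rw [hinv, Matrix.mulVec_diagonal]
      simp only [Matrix.mulVec, dotProduct, Pi.smul_apply, smul_eq_mul,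
        Matrix.transpose_apply, Matrix.cramer_apply, hcol]
      rw [Finset.mul_sum, Finset.sum_div]
      refine Finset.sum_congr rfl fun j _ => ?_
      rw [div_eq_mul_inv]
      ring
    have hden : L.det = ∑ s ∈ Msort m n, (∏ k, w (s k)) * ((Cm B s).det * (Cm B s).det) := by
      rw [hL, det_BWBt B w,
        sum_group _ (fun s hs => by rw [det_Cm_zero B hs, mul_zero])]
      refine Finset.sum_congr rfl fun s _ => ?_
      exact perm_sum B w s (fun s' => (Cm B s').det) (det_Cm_comp B s)
    have hnum : ∑ j, B j i * (w i * (L.updateRow j b).det)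
        = ∑ s ∈ Msort m n, (∏ k, w (s k)) * ((Cm B s).det * Hnum B b s i) := by
      rw [hL, num_expand B w b i,
        sum_group _ (fun s hs => by rw [Hnum_zero B b hs, mul_zero])]
      refine Finset.sum_congr rfl fun s _ => ?_
      have h1 : ∀ σ : Equiv.Perm (Fin m),
          ((∏ k, w (s (σ k))) * (∏ k, B k (s (σ k)))) * Hnum B b (s ∘ σ) i
            = (∏ k, (w (s (σ k)) * B k (s (σ k)))) * Hnum B b (s ∘ σ) i := by
        intro σ; rw [Finset.prod_mul_distrib]
      simp only [Function.comp_apply]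
      rw [Finset.sum_congr rfl (fun σ _ => h1 σ)]
      exact perm_sum B w s (fun s' => Hnum B b s' i) (fun σ => Hnum_comp B b s i σ)
    have hdet_nonneg : 0 ≤ L.det := by
      rw [hden]
      exact Finset.sum_nonneg fun s _ =>
        mul_nonneg (Finset.prod_nonneg fun k _ => hw _) (mul_self_nonneg _)
    have hdetpos : 0 < L.det := lt_of_le_of_ne hdet_nonneg (Ne.symm hne)
    rw [hq, div_le_iff₀ hdetpos, hnum]
    calc ∑ s ∈ Msort m n, (∏ k, w (s k)) * ((Cm B s).det * Hnum B b s i)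
        ≤ ∑ s ∈ Msort m n,
            (𝒟 * ∑ j, |b j|) * ((∏ k, w (s k)) * ((Cm B s).det * (Cm B s).det)) := by
          refine Finset.sum_le_sum fun s hs => ?_
          have hsinj := (mem_Msort.mp hs).injective
          have h2 : (Cm B s).det * Hnum B b s i
              ≤ ((Cm B s).det * (Cm B s).det) * (𝒟 * ∑ j, |b j|) := by
            calc (Cm B s).det * Hnum B b s i ≤ |(Cm B s).det * Hnum B b s i| := le_abs_self _
              _ = |(Cm B s).det| * |Hnum B b s i| := abs_mul _ _
              _ ≤ |(Cm B s).det| * (𝒟 * ∑ j, |b j|) :=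
                  mul_le_mul_of_nonneg_left (Hnum_le A 𝒟 hD b hsinj i) (abs_nonneg _)
              _ ≤ ((Cm B s).det ^ 2) * (𝒟 * ∑ j, |b j|) :=
                  mul_le_mul_of_nonneg_right (abs_det_le_sq A s) hDb
              _ = ((Cm B s).det * (Cm B s).det) * (𝒟 * ∑ j, |b j|) := by rw [sq]
          calc (∏ k, w (s k)) * ((Cm B s).det * Hnum B b s i)
              ≤ (∏ k, w (s k)) * (((Cm B s).det * (Cm B s).det) * (𝒟 * ∑ j, |b j|)) :=
                mul_le_mul_of_nonneg_left h2 (Finset.prod_nonneg fun k _ => hw _)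
            _ = (𝒟 * ∑ j, |b j|) * ((∏ k, w (s k)) * ((Cm B s).det * (Cm B s).det)) := by
                ring
      _ = (𝒟 * ∑ j, |b j|) * L.det := by rw [hden, ← Finset.mul_sum]
  · rw [Matrix.nonsing_inv_apply_not_isUnit _ hdet]
    simpa [Matrix.zero_mulVec, Matrix.mulVec_zero] using hDb

end PhysAux

theorem physarum_trajectory_bounded {m n : ℕ} (A : Matrix (Fin m) (Fin n) ℤ)
    (hrank : (rmat A).rank = m)
    (𝒟 : ℝ) (hD : IsGreatest (subdets A) 𝒟)
    (b : Fin m → ℤ) (c : Fin n → ℤ) (hc : ∀ i, 0 < c i)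
    (hfeas : ∃ y : Fin n → ℝ, (rmat A *ᵥ y = fun j => (b j : ℝ)) ∧ ∀ i, 0 ≤ y i)
    (T : ℝ) (hT : 0 < T) (x : ℝ → Fin n → ℝ)
    (hsol : IsPhysSolOn (rmat A) (fun j => (b j : ℝ)) (fun i => (c i : ℝ)) x (Set.Ico 0 T)) :
    ∀ i, ∀ t ∈ Set.Ico (0 : ℝ) T,
      x t i ≤ max (x 0 i) (𝒟 ^ 2 * n * ∑ j, |(b j : ℝ)|) := by
  intro i t ht
  set β : ℝ := 𝒟 ^ 2 * n * ∑ j, |(b j : ℝ)| with hβ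
  have hD1 : (1:ℝ) ≤ 𝒟 := PhysAux.one_le_D A 𝒟 hD
  have hb1 : 0 ≤ ∑ j, |(b j : ℝ)| := Finset.sum_nonneg fun _ _ => abs_nonneg _
  have hn1 : (1:ℝ) ≤ (n:ℝ) := by exact_mod_cast i.pos
  have hq : ∀ u ∈ Set.Ico (0:ℝ) T,
      physQ (rmat A) (fun j => (b j : ℝ)) (fun e => (c e : ℝ)) (x u) i ≤ β := by
    intro u hu
    have hw : ∀ e, 0 ≤ x u e / ((c e : ℤ) : ℝ) := fun e =>
      div_nonneg (le_of_lt ((hsol u hu).1 e)) (le_of_lt (by exact_mod_cast hc e))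
    have h1 := PhysAux.mulVec_inv_bound A 𝒟 hD (fun j => (b j : ℝ))
      (fun e => x u e / ((c e : ℤ) : ℝ)) hw i
    have h2 : physQ (rmat A) (fun j => (b j : ℝ)) (fun e => (c e : ℝ)) (x u) i
        = (Matrix.diagonal (fun e => x u e / ((c e : ℤ) : ℝ)) *ᵥ ((rmat A)ᵀ *ᵥ
          ((rmat A * Matrix.diagonal (fun e => x u e / ((c e : ℤ) : ℝ)) * (rmat A)ᵀ)⁻¹ *ᵥ
            (fun j => (b j : ℝ))))) i := rfl
    rw [h2]
    refine h1.trans ?_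
    rw [hβ]
    have h3 : 𝒟 ≤ 𝒟 ^ 2 * n := by nlinarith
    exact mul_le_mul_of_nonneg_right h3 hb1
  set g : ℝ → ℝ := fun u => (x u i - β) * Real.exp u with hg
  have hcont : ContinuousOn g (Set.Ico 0 T) := by
    have hx : ContinuousOn (fun u => x u i) (Set.Ico 0 T) := fun u hu =>
      (((continuous_apply i).continuousAt).comp_continuousWithinAt ((hsol u hu).2.continuousWithinAt))
    exact (hx.sub continuousOn_const).mul (Real.continuous_exp.continuousOn)
  have hderiv : ∀ u ∈ interior (Set.Ico (0:ℝ) T),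
      HasDerivAt g ((physQ (rmat A) (fun j => (b j:ℝ)) (fun e => (c e :ℝ)) (x u) i - x u i)
        * Real.exp u + (x u i - β) * Real.exp u) u := by
    intro u hu
    rw [interior_Ico] at hu
    have huIco : u ∈ Set.Ico (0:ℝ) T := ⟨le_of_lt hu.1, hu.2⟩
    have hx : HasDerivAt x
        (physQ (rmat A) (fun j => (b j:ℝ)) (fun e => (c e:ℝ)) (x u) - x u) u :=
      ((hsol u huIco).2).hasDerivAt (Ico_mem_nhds hu.1 hu.2)
    have hxi := hasDerivAt_pi.mp hx i
    have hxi' : HasDerivAt (fun u => x u i - β)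
        (physQ (rmat A) (fun j => (b j:ℝ)) (fun e => (c e:ℝ)) (x u) i - x u i) u := by
      simpa [Pi.sub_apply] using hxi.sub_const β
    exact hxi'.mul (Real.hasDerivAt_exp u)
  have hanti : AntitoneOn g (Set.Ico 0 T) := by
    refine antitoneOn_of_deriv_nonpos (convex_Ico 0 T) hcont
      (fun u hu => ((hderiv u hu).differentiableAt).differentiableWithinAt) ?_
    intro u hu
    rw [(hderiv u hu).deriv]
    have huIco : u ∈ Set.Ico (0:ℝ) T := by
      rw [interior_Ico] at hu; exact ⟨le_of_lt hu.1, hu.2⟩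
    have hqu := hq u huIco
    nlinarith [Real.exp_pos u]
  have h0 : (0:ℝ) ∈ Set.Ico (0:ℝ) T := ⟨le_refl 0, hT⟩
  have hgt := hanti h0 ht ht.1
  simp only [hg, Real.exp_zero, mul_one] at hgt
  have het : (1:ℝ) ≤ Real.exp t := Real.one_le_exp ht.1
  rcases le_total (x t i) β with h | h
  · exact le_max_of_le_right h
  · refine le_max_of_le_left ?_
    nlinarith [Real.exp_pos t]
end

section
/- Suppose x : [0,T) → ℝⁿ_{>0} is a solution of the Physarum dynamics ẋ = q − x for some finite T > 0. Then the limit lim_{t → T⁻} x(t) exists. -/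
open Matrix Filter Set Topology

noncomputable def physU {m n : ℕ} (B : Matrix (Fin m) (Fin n) ℝ) (b : Fin m → ℝ)
    (c x : Fin n → ℝ) : Fin n → ℝ :=
  Bᵀ *ᵥ ((B * physW c x * Bᵀ)⁻¹ *ᵥ b)

noncomputable def physK {m n : ℕ} (B : Matrix (Fin m) (Fin n) ℝ) (b : Fin m → ℝ)
    (c x : Fin n → ℝ) : ℝ :=
  ∑ i, (x i / c i) * (physU B b c x i)^2

section Alg

variable {m n : ℕ} {B : Matrix (Fin m) (Fin n) ℝ} {b : Fin m → ℝ} {c ξ : Fin n → ℝ}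

lemma physQ_apply (B : Matrix (Fin m) (Fin n) ℝ) (b : Fin m → ℝ) (c ξ : Fin n → ℝ) (i : Fin n) :
    physQ B b c ξ i = (ξ i / c i) * physU B b c ξ i := by
  simp [physQ, physU, physW, mulVec_diagonal]

lemma rowsIndep (hrank : B.rank = m) : Function.Injective (fun v => v ᵥ* B) := by
  have hli : LinearIndependent ℝ (fun i => B i) := by
    rw [linearIndependent_iff_card_eq_finrank_span]
    rw [Set.finrank, show (fun i => B i) = B.row from rfl, ← Matrix.rank_eq_finrank_span_row, hrank, Fintype.card_fin]
  exact Matrix.vecMul_injective_iff.mpr hli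

lemma isUnit_physL (hrank : B.rank = m) (hc : ∀ i, 0 < c i) (hξ : ∀ i, 0 < ξ i) :
    IsUnit (B * physW c ξ * Bᵀ) := by
  rw [← Matrix.mulVec_injective_iff_isUnit]
  have hrows := rowsIndep (B := B) hrank
  intro a b' hab
  have hv : (B * physW c ξ * Bᵀ) *ᵥ (a - b') = 0 := by
    rw [mulVec_sub, hab, sub_self]
  set v := a - b' with hvdef
  have hquad : (a - b') ⬝ᵥ ((B * physW c ξ * Bᵀ) *ᵥ (a - b')) = 0 := by
    rw [hv]; simp
  have hexp : (a - b') ⬝ᵥ ((B * physW c ξ * Bᵀ) *ᵥ (a - b')) =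
      ∑ i, (ξ i / c i) * ((Bᵀ *ᵥ (a - b')) i)^2 := by
    rw [← Matrix.mulVec_mulVec, ← Matrix.mulVec_mulVec, Matrix.dotProduct_mulVec,
      ← Matrix.mulVec_transpose]
    simp [dotProduct, physW, mulVec_diagonal, Finset.mul_sum]
    refine Finset.sum_congr rfl fun i _ => by ring
  have hu0 : Bᵀ *ᵥ (a - b') = 0 := by
    funext i
    have hnn : ∀ i ∈ Finset.univ, (0:ℝ) ≤ (ξ i / c i) * ((Bᵀ *ᵥ (a - b')) i)^2 :=
      fun i _ => mul_nonneg (le_of_lt (div_pos (hξ i) (hc i))) (sq_nonneg _)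
    have := (Finset.sum_eq_zero_iff_of_nonneg hnn).1 (hexp ▸ hquad) i (Finset.mem_univ i)
    have hwpos : 0 < ξ i / c i := div_pos (hξ i) (hc i)
    have := (mul_eq_zero.1 this).resolve_left (ne_of_gt hwpos)
    simpa [pow_eq_zero_iff] using this
  have : (a - b') ᵥ* B = 0 ᵥ* B := by
    rw [← Matrix.mulVec_transpose, hu0]; simp
  exact sub_eq_zero.1 (hrows this)

lemma physB_mulVec_physQ (hrank : B.rank = m) (hc : ∀ i, 0 < c i) (hξ : ∀ i, 0 < ξ i) :
    B *ᵥ physQ B b c ξ = b := by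
  have hL := isUnit_physL hrank hc hξ (B := B) (ξ := ξ)
  have hdet : IsUnit (B * physW c ξ * Bᵀ).det := (Matrix.isUnit_iff_isUnit_det _).1 hL
  calc B *ᵥ physQ B b c ξ
      = (B * physW c ξ * Bᵀ * (B * physW c ξ * Bᵀ)⁻¹) *ᵥ b := by
        simp only [physQ, Matrix.mulVec_mulVec, Matrix.mul_assoc]
    _ = b := by rw [Matrix.mul_nonsing_inv _ hdet, Matrix.one_mulVec]

lemma sum_mul_physU (hrank : B.rank = m) (hc : ∀ i, 0 < c i) (hξ : ∀ i, 0 < ξ i)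
    {y : Fin n → ℝ} (hy : B *ᵥ y = b) :
    ∑ i, y i * physU B b c ξ i = physK B b c ξ := by
  set p := (B * physW c ξ * Bᵀ)⁻¹ *ᵥ b with hp
  have key : ∀ z : Fin n → ℝ, B *ᵥ z = b → ∑ i, z i * physU B b c ξ i = b ⬝ᵥ p := by
    intro z hz
    have h0 : ∑ i, z i * physU B b c ξ i = z ⬝ᵥ (Bᵀ *ᵥ p) := by
      simp only [dotProduct, physU, hp]
    rw [h0, Matrix.dotProduct_mulVec, Matrix.vecMul_transpose, hz]
  have hq : ∑ i, physQ B b c ξ i * physU B b c ξ i = b ⬝ᵥ p :=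
    key _ (physB_mulVec_physQ hrank hc hξ)
  have hqK : ∑ i, physQ B b c ξ i * physU B b c ξ i = physK B b c ξ := by
    unfold physK
    refine Finset.sum_congr rfl fun i _ => by rw [physQ_apply]; ring
  rw [key y hy, ← hq, hqK]

lemma physK_nonneg (B : Matrix (Fin m) (Fin n) ℝ) (b : Fin m → ℝ) (c ξ : Fin n → ℝ)
    (hc : ∀ i, 0 < c i) (hξ : ∀ i, 0 < ξ i) : 0 ≤ physK B b c ξ :=
  Finset.sum_nonneg fun i _ => mul_nonneg (le_of_lt (div_pos (hξ i) (hc i))) (sq_nonneg _)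

lemma term_le_physK (hc : ∀ i, 0 < c i) (hξ : ∀ i, 0 < ξ i) (i : Fin n) :
    (ξ i / c i) * (physU B b c ξ i)^2 ≤ physK B b c ξ :=
  Finset.single_le_sum (f := fun j => (ξ j / c j) * (physU B b c ξ j)^2)
    (fun j _ => mul_nonneg (le_of_lt (div_pos (hξ j) (hc j))) (sq_nonneg _)) (Finset.mem_univ i)

lemma sum_c_physQ_le (hc : ∀ i, 0 < c i) (hξ : ∀ i, 0 < ξ i) :
    ∑ i, c i * physQ B b c ξ i ≤ ((∑ i, c i * ξ i) + physK B b c ξ) / 2 := by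
  unfold physK
  rw [← Finset.sum_add_distrib, Finset.sum_div]
  refine Finset.sum_le_sum fun i _ => ?_
  rw [physQ_apply]
  have hci := hc i; have hxi := hξ i
  have hw : 0 < ξ i / c i := div_pos hxi hci
  set u := physU B b c ξ i
  have h1 : c i * ((ξ i / c i) * u) = ξ i * u := by field_simp
  rw [h1]
  nlinarith [mul_nonneg hw.le (sq_nonneg (c i - u)), sq_nonneg (c i - u),
    div_mul_cancel₀ (ξ i) (ne_of_gt hci)]

lemma abs_physQ_le (hc : ∀ i, 0 < c i) (hξ : ∀ i, 0 < ξ i) (i : Fin n) :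
    |physQ B b c ξ i| ≤ ((ξ i / c i) + physK B b c ξ) / 2 := by
  rw [physQ_apply]
  have hw : 0 < ξ i / c i := div_pos (hξ i) (hc i)
  set w := ξ i / c i
  set u := physU B b c ξ i
  have h1 : w * u^2 ≤ physK B b c ξ := term_le_physK hc hξ i
  have h2 : |w * u| = w * |u| := by rw [abs_mul, abs_of_pos hw]
  rw [h2]
  nlinarith [mul_nonneg hw.le (sq_nonneg (1 - |u|)), sq_abs u, abs_nonneg u]

end Alg

section ODEhelp

lemma monoOn_Ico_of_deriv {T : ℝ} {f g : ℝ → ℝ}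
    (hf : ∀ t ∈ Ico (0:ℝ) T, HasDerivWithinAt f (g t) (Ico (0:ℝ) T) t)
    (hg : ∀ t ∈ Ico (0:ℝ) T, 0 ≤ g t) : MonotoneOn f (Ico (0:ℝ) T) := by
  refine monotoneOn_of_hasDerivWithinAt_nonneg (convex_Ico 0 T)
    (fun t ht => (hf t ht).continuousWithinAt) (f' := g) (fun t ht => ?_) (fun t ht => ?_)
  · rw [interior_Ico] at ht ⊢
    exact (hf t (Ioo_subset_Ico_self ht)).mono Ioo_subset_Ico_self
  · rw [interior_Ico] at ht
    exact hg t (Ioo_subset_Ico_self ht)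

lemma exists_tendsto_of_monoOn {T Cb : ℝ} (hT : 0 < T) {f : ℝ → ℝ}
    (hf : MonotoneOn f (Ico (0:ℝ) T)) (hb : ∀ t ∈ Ico (0:ℝ) T, f t ≤ Cb) :
    ∃ l : ℝ, Tendsto f (nhdsWithin T (Ico (0:ℝ) T)) (nhds l) := by
  set F : ℝ → ℝ := fun t => f (max t 0) with hF
  have hmem : ∀ t ∈ Iio T, max t 0 ∈ Ico (0:ℝ) T := by
    intro t ht
    exact ⟨le_max_right _ _, max_lt ht hT⟩
  have hFmono : MonotoneOn F (Iio T) := by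
    intro a ha b' hb' hab
    exact hf (hmem a ha) (hmem b' hb') (max_le_max hab le_rfl)
  have hFbdd : BddAbove (F '' Iio T) := by
    refine ⟨Cb, fun z hz => ?_⟩
    obtain ⟨t, ht, rfl⟩ := hz
    exact hb _ (hmem t ht)
  have hFt := hFmono.tendsto_nhdsLT hFbdd
  have h1 : Tendsto F (nhdsWithin T (Ico (0:ℝ) T)) (nhds (sSup (F '' Iio T))) :=
    hFt.mono_left (nhdsWithin_mono T Ico_subset_Iio_self)
  refine ⟨sSup (F '' Iio T), h1.congr' ?_⟩
  filter_upwards [self_mem_nhdsWithin] with t ht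
  simp only [hF, max_eq_left ht.1]

end ODEhelp

theorem physarum_aux {m n : ℕ} (B : Matrix (Fin m) (Fin n) ℝ) (hrank : B.rank = m)
    (b : Fin m → ℝ) (c : Fin n → ℝ) (hc : ∀ i, 0 < c i)
    (y : Fin n → ℝ) (hy : B *ᵥ y = b) (hy0 : ∀ i, 0 ≤ y i)
    (T : ℝ) (hT : 0 < T) (x : ℝ → Fin n → ℝ)
    (hsol : IsPhysSolOn B b c x (Set.Ico 0 T)) :
    ∃ xT : Fin n → ℝ, Tendsto x (nhdsWithin T (Set.Ico 0 T)) (nhds xT) := by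
  have hpos : ∀ t ∈ Ico (0:ℝ) T, ∀ i, 0 < x t i := fun t ht => (hsol t ht).1
  have hxd : ∀ i, ∀ t ∈ Ico (0:ℝ) T, HasDerivWithinAt (fun τ => x τ i)
      (physQ B b c (x t) i - x t i) (Ico (0:ℝ) T) t := by
    intro i t ht
    simpa using (hasDerivWithinAt_pi.1 (hsol t ht).2) i
  set K : ℝ → ℝ := fun t => physK B b c (x t) with hKdef
  set E : ℝ → ℝ := fun t => ∑ i, c i * x t i with hEdef
  set φ : ℝ → ℝ := fun t => ∑ i, c i * y i * Real.log (x t i) with hφdef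
  set cy : ℝ := ∑ i, c i * y i with hcydef
  have hcy : 0 ≤ cy := Finset.sum_nonneg fun i _ => mul_nonneg (hc i).le (hy0 i)
  have hK0 : ∀ t ∈ Ico (0:ℝ) T, 0 ≤ K t := fun t ht =>
    physK_nonneg B b c (x t) hc (hpos t ht)
  have hE0 : ∀ t ∈ Ico (0:ℝ) T, 0 ≤ E t := fun t ht =>
    Finset.sum_nonneg fun i _ => mul_nonneg (hc i).le (hpos t ht i).le
  have hEd : ∀ t ∈ Ico (0:ℝ) T, HasDerivWithinAt E
      (∑ i, c i * (physQ B b c (x t) i - x t i)) (Ico (0:ℝ) T) t := by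
    intro t ht
    exact HasDerivWithinAt.fun_sum fun i _ => (hxd i t ht).const_mul (c i)
  have hφd : ∀ t ∈ Ico (0:ℝ) T, HasDerivWithinAt φ (K t - cy) (Ico (0:ℝ) T) t := by
    intro t ht
    have h1 : HasDerivWithinAt φ
        (∑ i, c i * y i * ((physQ B b c (x t) i - x t i) / x t i)) (Ico (0:ℝ) T) t :=
      HasDerivWithinAt.fun_sum fun i _ =>
        ((hxd i t ht).log (ne_of_gt (hpos t ht i))).const_mul (c i * y i)
    convert h1 using 1
    have hterm : ∀ i : Fin n, c i * y i * ((physQ B b c (x t) i - x t i) / x t i)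
        = y i * physU B b c (x t) i - c i * y i := by
      intro i
      rw [physQ_apply]
      have hx0 : x t i ≠ 0 := ne_of_gt (hpos t ht i)
      have hc0 : c i ≠ 0 := ne_of_gt (hc i)
      field_simp
    rw [Finset.sum_congr rfl fun i _ => hterm i, Finset.sum_sub_distrib,
      sum_mul_physU hrank hc (hpos t ht) hy]
  -- Step A: bound on E t - φ t / 2
  have hA : ∀ t ∈ Ico (0:ℝ) T, E t - φ t / 2 ≤ E 0 - φ 0 / 2 + cy * T / 2 := by
    have hmono : MonotoneOn (fun t => cy / 2 * t + φ t / 2 - E t) (Ico (0:ℝ) T) := by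
      refine monoOn_Ico_of_deriv (g := fun t => cy / 2 + (K t - cy) / 2
        - (∑ i, c i * (physQ B b c (x t) i - x t i))) (fun t ht => ?_) (fun t ht => ?_)
      · have hid : HasDerivWithinAt (fun τ : ℝ => cy / 2 * τ) (cy / 2) (Ico (0:ℝ) T) t := by
          simpa using (hasDerivWithinAt_id t (Ico (0:ℝ) T)).const_mul (cy / 2)
        exact (hid.add ((hφd t ht).div_const 2)).sub (hEd t ht)
      · have hsum : ∑ i, c i * (physQ B b c (x t) i - x t i)
            = (∑ i, c i * physQ B b c (x t) i) - E t := by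
          rw [hEdef]
          rw [← Finset.sum_sub_distrib]
          exact Finset.sum_congr rfl fun i _ => by ring
        have hcq := sum_c_physQ_le (B := B) (b := b) hc (hpos t ht)
        show (0:ℝ) ≤ cy / 2 + (K t - cy) / 2 - ∑ i, c i * (physQ B b c (x t) i - x t i)
        rw [hsum]
        have hE := hE0 t ht
        have h5 : K t = physK B b c (x t) := rfl
        have h6 : E t = ∑ i, c i * x t i := rfl
        rw [h5, h6]
        linarith
    intro t ht
    have h0 : (0:ℝ) ∈ Ico (0:ℝ) T := ⟨le_refl _, hT⟩
    have := hmono h0 ht ht.1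
    simp only [mul_zero] at this
    nlinarith [mul_le_mul_of_nonneg_left ht.2.le (by linarith : (0:ℝ) ≤ cy / 2)]
  set CU : ℝ := E 0 - φ 0 / 2 + cy * T / 2 with hCUdef
  -- Step B: φ ≤ E + cy log Y, hence E bounded
  set Y : ℝ := 1 + ∑ i, y i with hYdef
  have hY1 : (1:ℝ) ≤ Y := by
    rw [hYdef]
    have : 0 ≤ ∑ i, y i := Finset.sum_nonneg fun i _ => hy0 i
    linarith
  have hYpos : (0:ℝ) < Y := lt_of_lt_of_le one_pos hY1
  have hyY : ∀ i, y i ≤ Y := by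
    intro i
    rw [hYdef]
    have h1 : y i ≤ ∑ j, y j :=
      Finset.single_le_sum (fun j _ => hy0 j) (Finset.mem_univ i)
    linarith
  have hφle : ∀ t ∈ Ico (0:ℝ) T, φ t ≤ E t + cy * Real.log Y := by
    intro t ht
    have hterm : ∀ i : Fin n, c i * y i * Real.log (x t i)
        ≤ c i * x t i + c i * y i * Real.log Y := by
      intro i
      have hxpos := hpos t ht i
      have hlog : Real.log (x t i) ≤ x t i / Y + Real.log Y := by
        have h1 : Real.log (x t i / Y) ≤ x t i / Y - 1 :=
          Real.log_le_sub_one_of_pos (div_pos hxpos hYpos)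
        rw [Real.log_div (ne_of_gt hxpos) (ne_of_gt hYpos)] at h1
        linarith
      have hcy0 : 0 ≤ c i * y i := mul_nonneg (hc i).le (hy0 i)
      have h2 : c i * y i * Real.log (x t i) ≤ c i * y i * (x t i / Y + Real.log Y) :=
        mul_le_mul_of_nonneg_left hlog hcy0
      have h3 : c i * y i * (x t i / Y) ≤ c i * x t i := by
        rw [div_eq_mul_inv]
        have hYinv : 0 < Y⁻¹ := inv_pos.2 hYpos
        have : y i * Y⁻¹ ≤ 1 := by
          rw [← div_eq_mul_inv, div_le_one hYpos]; exact hyY i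
        nlinarith [mul_nonneg (hc i).le hxpos.le]
      nlinarith
    calc φ t ≤ ∑ i, (c i * x t i + c i * y i * Real.log Y) :=
          Finset.sum_le_sum fun i _ => hterm i
      _ = E t + cy * Real.log Y := by
          rw [Finset.sum_add_distrib, hEdef, hcydef, Finset.sum_mul]
  set Ebar : ℝ := 2 * CU + cy * Real.log Y with hEbardef
  have hEle : ∀ t ∈ Ico (0:ℝ) T, E t ≤ Ebar := by
    intro t ht
    have h1 := hA t ht
    have h2 := hφle t ht
    rw [hEbardef, hCUdef]
    linarith
  have hxle : ∀ t ∈ Ico (0:ℝ) T, ∀ i, x t i ≤ Ebar / c i := by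
    intro t ht i
    have h1 : c i * x t i ≤ E t :=
      Finset.single_le_sum (f := fun j => c j * x t j)
        (fun j _ => mul_nonneg (hc j).le (hpos t ht j).le) (Finset.mem_univ i)
    rw [le_div_iff₀ (hc i)]
    calc x t i * c i = c i * x t i := by ring
      _ ≤ Ebar := h1.trans (hEle t ht)
  -- Step D: per-coordinate convergence
  have hlim : ∀ i, ∃ L : ℝ, Tendsto (fun t => x t i) (nhdsWithin T (Ico (0:ℝ) T)) (nhds L) := by
    intro i
    have hEbarpos : 0 < Ebar := by
      have h0 : (0:ℝ) ∈ Ico (0:ℝ) T := ⟨le_refl _, hT⟩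
      have h1 : c i * x 0 i ≤ E 0 :=
        Finset.single_le_sum (f := fun j => c j * x 0 j)
          (fun j _ => mul_nonneg (hc j).le (hpos 0 h0 j).le) (Finset.mem_univ i)
      have h2 : 0 < c i * x 0 i := mul_pos (hc i) (hpos 0 h0 i)
      exact lt_of_lt_of_le h2 (h1.trans (hEle 0 h0))
    set Ci : ℝ := Ebar / (c i)^2 with hCidef
    have hCi : 0 ≤ Ci := div_nonneg hEbarpos.le (sq_nonneg _)
    have hwle : ∀ t ∈ Ico (0:ℝ) T, x t i / c i ≤ Ci := by
      intro t ht
      rw [hCidef, div_le_div_iff₀ (hc i) (pow_pos (hc i) 2)]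
      have := hxle t ht i
      rw [le_div_iff₀ (hc i)] at this
      nlinarith [hc i]
    set f : ℝ → ℝ := fun t => Real.exp t * x t i with hfdef
    have hfd : ∀ t ∈ Ico (0:ℝ) T, HasDerivWithinAt f
        (Real.exp t * physQ B b c (x t) i) (Ico (0:ℝ) T) t := by
      intro t ht
      have h := ((Real.hasDerivAt_exp t).hasDerivWithinAt).mul (hxd i t ht)
      exact h.congr_deriv (by ring)
    set g : ℝ → ℝ := fun t => (Real.exp T / 2) * ((Ci + cy) * t + φ t) with hgdef
    have hgd : ∀ t ∈ Ico (0:ℝ) T, HasDerivWithinAt g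
        ((Real.exp T / 2) * (Ci + K t)) (Ico (0:ℝ) T) t := by
      intro t ht
      have hid : HasDerivWithinAt (fun τ : ℝ => (Ci + cy) * τ) (Ci + cy) (Ico (0:ℝ) T) t := by
        simpa using (hasDerivWithinAt_id t (Ico (0:ℝ) T)).const_mul (Ci + cy)
      have h := (hid.add (hφd t ht)).const_mul (Real.exp T / 2)
      exact h.congr_deriv (by ring)
    have hqb : ∀ t ∈ Ico (0:ℝ) T, |Real.exp t * physQ B b c (x t) i|
        ≤ (Real.exp T / 2) * (Ci + K t) := by
      intro t ht
      rw [abs_mul, abs_of_pos (Real.exp_pos t)]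
      have h1 : |physQ B b c (x t) i| ≤ (x t i / c i + K t) / 2 :=
        abs_physQ_le hc (hpos t ht) i
      have h2 : Real.exp t ≤ Real.exp T := Real.exp_le_exp.2 ht.2.le
      have h3 := hwle t ht
      have h4 := hK0 t ht
      have h5 : (0:ℝ) ≤ (x t i / c i + K t) / 2 := by
        have : 0 ≤ x t i / c i := (div_pos (hpos t ht i) (hc i)).le
        linarith
      calc Real.exp t * |physQ B b c (x t) i|
          ≤ Real.exp T * ((x t i / c i + K t) / 2) :=
            mul_le_mul h2 h1 (abs_nonneg _) (Real.exp_pos T).le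
        _ ≤ (Real.exp T / 2) * (Ci + K t) := by nlinarith [Real.exp_pos T]
    have hmonoP : MonotoneOn (fun t => g t - f t) (Ico (0:ℝ) T) := by
      refine monoOn_Ico_of_deriv (g := fun t =>
        (Real.exp T / 2) * (Ci + K t) - Real.exp t * physQ B b c (x t) i)
        (fun t ht => (hgd t ht).sub (hfd t ht)) (fun t ht => ?_)
      have := (abs_le.1 (hqb t ht)).2
      linarith
    have hmonoM : MonotoneOn (fun t => g t + f t) (Ico (0:ℝ) T) := by
      refine monoOn_Ico_of_deriv (g := fun t =>
        (Real.exp T / 2) * (Ci + K t) + Real.exp t * physQ B b c (x t) i)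
        (fun t ht => (hgd t ht).add (hfd t ht)) (fun t ht => ?_)
      have := (abs_le.1 (hqb t ht)).1
      linarith
    have hgub : ∀ t ∈ Ico (0:ℝ) T, g t
        ≤ (Real.exp T / 2) * ((Ci + cy) * T + (Ebar + cy * Real.log Y)) := by
      intro t ht
      have h1 : φ t ≤ Ebar + cy * Real.log Y := (hφle t ht).trans (by linarith [hEle t ht])
      have h2 : (Ci + cy) * t ≤ (Ci + cy) * T :=
        mul_le_mul_of_nonneg_left ht.2.le (by linarith)
      rw [hgdef]
      have := Real.exp_pos T
      nlinarith
    have hfub : ∀ t ∈ Ico (0:ℝ) T, f t ≤ Real.exp T * (Ebar / c i) := by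
      intro t ht
      have h1 := hxle t ht i
      have h2 : Real.exp t ≤ Real.exp T := Real.exp_le_exp.2 ht.2.le
      exact mul_le_mul h2 h1 (hpos t ht i).le (Real.exp_pos T).le
    have hf0 : ∀ t ∈ Ico (0:ℝ) T, 0 ≤ f t := fun t ht =>
      mul_nonneg (Real.exp_pos t).le (hpos t ht i).le
    obtain ⟨lP, hlP⟩ := exists_tendsto_of_monoOn
      (Cb := (Real.exp T / 2) * ((Ci + cy) * T + (Ebar + cy * Real.log Y))) hT hmonoP
      (fun t ht => by
        show g t - f t ≤ _
        linarith [hgub t ht, hf0 t ht])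
    obtain ⟨lM, hlM⟩ := exists_tendsto_of_monoOn
      (Cb := (Real.exp T / 2) * ((Ci + cy) * T + (Ebar + cy * Real.log Y))
        + Real.exp T * (Ebar / c i)) hT hmonoM
      (fun t ht => by
        show g t + f t ≤ _
        linarith [hgub t ht, hfub t ht])
    have hftend : Tendsto f (nhdsWithin T (Ico (0:ℝ) T)) (nhds ((lM - lP) / 2)) := by
      have h := (hlM.sub hlP).div_const 2
      refine h.congr fun t => by ring
    have hexp : Tendsto (fun t : ℝ => Real.exp (-t)) (nhdsWithin T (Ico (0:ℝ) T))
        (nhds (Real.exp (-T))) := by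
      exact ((Real.continuous_exp.comp continuous_neg).tendsto T).mono_left nhdsWithin_le_nhds
    refine ⟨(lM - lP) / 2 * Real.exp (-T), ?_⟩
    have h := hftend.mul hexp
    refine h.congr fun t => ?_
    rw [hfdef]
    simp only []
    rw [Real.exp_neg]
    field_simp [Real.exp_ne_zero]
  choose L hL using hlim
  exact ⟨L, tendsto_pi_nhds.2 hL⟩


theorem physarum_limit_exists_at_finite_time {m n : ℕ} (A : Matrix (Fin m) (Fin n) ℤ)
    (hrank : (rmat A).rank = m)
    (b : Fin m → ℤ) (c : Fin n → ℤ) (hc : ∀ i, 0 < c i)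
    (hfeas : ∃ y : Fin n → ℝ, (rmat A *ᵥ y = fun j => (b j : ℝ)) ∧ ∀ i, 0 ≤ y i)
    (T : ℝ) (hT : 0 < T) (x : ℝ → Fin n → ℝ)
    (hsol : IsPhysSolOn (rmat A) (fun j => (b j : ℝ)) (fun i => (c i : ℝ)) x (Set.Ico 0 T)) :
    ∃ xT : Fin n → ℝ, Filter.Tendsto x (nhdsWithin T (Set.Ico 0 T)) (nhds xT) := by
  obtain ⟨y, hy, hy0⟩ := hfeas
  exact physarum_aux (rmat A) hrank _ _ (fun i => by exact_mod_cast hc i) y hy hy0 T hT x hsol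
end
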